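/- arXiv:2407.18833 — 5 statements merged into one kernel-verified Lean document; each statement's English description precedes it below -/
import Mathlib

section
/- (Theorem 3) Suppose the historical data are generated by Σ and satisfy the Assumption. Then there exists an observer candidate Σ̂ that is a UIO for Σ if and only if for every integer q and every matrix Ψ = [V_p V_f W_p W_f R_p R_f] ∈ ℝ^{q×2(n+m+p)} (with blocks V_p, V_f ∈ ℝ^{q×n}, W_p, W_f ∈ ℝ^{q×m}, R_p, R_f ∈ ℝ^{q×p}) whose kernel equals the column space of Φ_d, there exist a matrix Ω ∈ ℝ^{n×q} and a Schur stable matrix A* ∈ ℝ^{n×n} such that Ω V_p = −A* and Ω V_f = I_n. -/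
open Matrix Filter

noncomputable section

/-- A real square matrix is Schur stable if all its complex eigenvalues
have modulus strictly less than 1. -/
def SchurStable {n : ℕ} (M : Matrix (Fin n) (Fin n) ℝ) : Prop :=
  ∀ μ ∈ spectrum ℂ (M.map (algebraMap ℝ ℂ)), ‖μ‖ < 1

/-- `(x, u, y, d)` is a solution of the system `Σ`:
`x(t+1) = A x(t) + B u(t) + E d(t)`, `y(t) = C x(t) + D u(t) + F d(t)`. -/
def SigmaSol {n m p r : ℕ}
    (A : Matrix (Fin n) (Fin n) ℝ) (B : Matrix (Fin n) (Fin m) ℝ)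
    (Cm : Matrix (Fin p) (Fin n) ℝ) (Dm : Matrix (Fin p) (Fin m) ℝ)
    (E : Matrix (Fin n) (Fin r) ℝ) (F : Matrix (Fin p) (Fin r) ℝ)
    (x : ℕ → Fin n → ℝ) (u : ℕ → Fin m → ℝ) (y : ℕ → Fin p → ℝ)
    (d : ℕ → Fin r → ℝ) : Prop :=
  ∀ t : ℕ,
    x (t + 1) = A.mulVec (x t) + B.mulVec (u t) + E.mulVec (d t) ∧
    y t = Cm.mulVec (x t) + Dm.mulVec (u t) + F.mulVec (d t)

/-- `(x̂, u, y, z)` is a solution of the observer candidate `Σ̂`: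
`z(t+1) = A_UIO z(t) + Bu u(t) + By y(t)`, `x̂(t) = z(t) + Du u(t) + Dy y(t)`. -/
def ObsSol {n m p : ℕ}
    (Auio : Matrix (Fin n) (Fin n) ℝ) (Bu : Matrix (Fin n) (Fin m) ℝ)
    (By : Matrix (Fin n) (Fin p) ℝ) (Du : Matrix (Fin n) (Fin m) ℝ)
    (Dy : Matrix (Fin n) (Fin p) ℝ)
    (xh : ℕ → Fin n → ℝ) (u : ℕ → Fin m → ℝ) (y : ℕ → Fin p → ℝ)
    (z : ℕ → Fin n → ℝ) : Prop :=
  ∀ t : ℕ,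
    z (t + 1) = Auio.mulVec (z t) + Bu.mulVec (u t) + By.mulVec (y t) ∧
    xh t = z t + Du.mulVec (u t) + Dy.mulVec (y t)

/-- `Σ̂` is an acceptor for `Σ`: every solution of `Σ` can be tracked exactly. -/
def IsAcceptor {n m p r : ℕ}
    (A : Matrix (Fin n) (Fin n) ℝ) (B : Matrix (Fin n) (Fin m) ℝ)
    (Cm : Matrix (Fin p) (Fin n) ℝ) (Dm : Matrix (Fin p) (Fin m) ℝ)
    (E : Matrix (Fin n) (Fin r) ℝ) (F : Matrix (Fin p) (Fin r) ℝ)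
    (Auio : Matrix (Fin n) (Fin n) ℝ) (Bu : Matrix (Fin n) (Fin m) ℝ)
    (By : Matrix (Fin n) (Fin p) ℝ) (Du : Matrix (Fin n) (Fin m) ℝ)
    (Dy : Matrix (Fin n) (Fin p) ℝ) : Prop :=
  ∀ (x : ℕ → Fin n → ℝ) (u : ℕ → Fin m → ℝ) (y : ℕ → Fin p → ℝ)
    (d : ℕ → Fin r → ℝ), SigmaSol A B Cm Dm E F x u y d →
      ∃ z : ℕ → Fin n → ℝ, ObsSol Auio Bu By Du Dy x u y z

/-- `Σ̂` is an unknown-input observer (UIO) for `Σ`: it is an acceptor and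
the estimation error tends to zero for all matching solutions. -/
def IsUIO {n m p r : ℕ}
    (A : Matrix (Fin n) (Fin n) ℝ) (B : Matrix (Fin n) (Fin m) ℝ)
    (Cm : Matrix (Fin p) (Fin n) ℝ) (Dm : Matrix (Fin p) (Fin m) ℝ)
    (E : Matrix (Fin n) (Fin r) ℝ) (F : Matrix (Fin p) (Fin r) ℝ)
    (Auio : Matrix (Fin n) (Fin n) ℝ) (Bu : Matrix (Fin n) (Fin m) ℝ)
    (By : Matrix (Fin n) (Fin p) ℝ) (Du : Matrix (Fin n) (Fin m) ℝ)
    (Dy : Matrix (Fin n) (Fin p) ℝ) : Prop :=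
  IsAcceptor A B Cm Dm E F Auio Bu By Du Dy ∧
  ∀ (x : ℕ → Fin n → ℝ) (u : ℕ → Fin m → ℝ) (y : ℕ → Fin p → ℝ)
    (d : ℕ → Fin r → ℝ) (xh : ℕ → Fin n → ℝ) (z : ℕ → Fin n → ℝ),
      SigmaSol A B Cm Dm E F x u y d → ObsSol Auio Bu By Du Dy xh u y z →
      Tendsto (fun t => x t - xh t) atTop (nhds 0)

/-- Row index type of the data matrix `Φ_d = [X_p; X_f; U_p; U_f; Y_p; Y_f]`. -/
abbrev RowIdx (n m p : ℕ) := (Fin n ⊕ Fin n) ⊕ ((Fin m ⊕ Fin m) ⊕ (Fin p ⊕ Fin p))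

/-- The data matrix `Φ_d = [X_p; X_f; U_p; U_f; Y_p; Y_f] ∈ ℝ^{2(n+m+p)×(T−1)}`. -/
def PhiD {n m p : ℕ} (T : ℕ) (xd : ℕ → Fin n → ℝ) (ud : ℕ → Fin m → ℝ)
    (yd : ℕ → Fin p → ℝ) : Matrix (RowIdx n m p) (Fin (T - 1)) ℝ :=
  Matrix.of fun i j =>
    match i with
    | Sum.inl (Sum.inl a) => xd j.1 a
    | Sum.inl (Sum.inr a) => xd (j.1 + 1) a
    | Sum.inr (Sum.inl (Sum.inl a)) => ud j.1 a
    | Sum.inr (Sum.inl (Sum.inr a)) => ud (j.1 + 1) a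
    | Sum.inr (Sum.inr (Sum.inl a)) => yd j.1 a
    | Sum.inr (Sum.inr (Sum.inr a)) => yd (j.1 + 1) a

/-- The stacked vector `(x(t), x(t+1), u(t), u(t+1), y(t), y(t+1))`. -/
def stackVec {n m p : ℕ} (x : ℕ → Fin n → ℝ) (u : ℕ → Fin m → ℝ)
    (y : ℕ → Fin p → ℝ) (t : ℕ) : RowIdx n m p → ℝ :=
  fun i =>
    match i with
    | Sum.inl (Sum.inl a) => x t a
    | Sum.inl (Sum.inr a) => x (t + 1) a
    | Sum.inr (Sum.inl (Sum.inl a)) => u t a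
    | Sum.inr (Sum.inl (Sum.inr a)) => u (t + 1) a
    | Sum.inr (Sum.inr (Sum.inl a)) => y t a
    | Sum.inr (Sum.inr (Sum.inr a)) => y (t + 1) a

/-- The matrix `[X_p; U_p; U_f; D_p; D_f]` appearing in the Assumption. -/
def HistMat {n m r : ℕ} (T : ℕ) (xd : ℕ → Fin n → ℝ) (ud : ℕ → Fin m → ℝ)
    (dd : ℕ → Fin r → ℝ) :
    Matrix (Fin n ⊕ ((Fin m ⊕ Fin m) ⊕ (Fin r ⊕ Fin r))) (Fin (T - 1)) ℝ :=
  Matrix.of fun i j =>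
    match i with
    | Sum.inl a => xd j.1 a
    | Sum.inr (Sum.inl (Sum.inl a)) => ud j.1 a
    | Sum.inr (Sum.inl (Sum.inr a)) => ud (j.1 + 1) a
    | Sum.inr (Sum.inr (Sum.inl a)) => dd j.1 a
    | Sum.inr (Sum.inr (Sum.inr a)) => dd (j.1 + 1) a

/-! ### Auxiliary lemmas -/

section SchurLemmas

attribute [local instance] Matrix.linftyOpNormedRing Matrix.linftyOpNormedAlgebra
  Matrix.linftyOpNormedAddCommGroup

lemma norm_map_complex {n : ℕ} (A : Matrix (Fin n) (Fin n) ℝ) :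
    ‖A.map (algebraMap ℝ ℂ)‖₊ = ‖A‖₊ := by
  rw [Matrix.linfty_opNNNorm_def, Matrix.linfty_opNNNorm_def]
  congr 1
  ext i
  congr 1
  ext j
  simp [Matrix.map_apply]

lemma map_pow_complex {n : ℕ} (A : Matrix (Fin n) (Fin n) ℝ) (k : ℕ) :
    (A.map (algebraMap ℝ ℂ)) ^ k = (A ^ k).map (algebraMap ℝ ℂ) := by
  have h : ∀ B : Matrix (Fin n) (Fin n) ℝ,
      B.map (algebraMap ℝ ℂ) = (algebraMap ℝ ℂ).mapMatrix B := fun _ => rfl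
  rw [h, h, ← map_pow]

lemma schur_norm_pow_tendsto {n : ℕ} (hn : 0 < n) (M : Matrix (Fin n) (Fin n) ℝ)
    (h : SchurStable M) :
    Tendsto (fun k => ‖M ^ k‖) atTop (nhds 0) := by
  haveI : Nonempty (Fin n) := ⟨⟨0, hn⟩⟩
  haveI : CompleteSpace (Matrix (Fin n) (Fin n) ℂ) :=
    FiniteDimensional.complete ℂ (Matrix (Fin n) (Fin n) ℂ)
  set Mc := M.map (algebraMap ℝ ℂ) with hMc
  obtain ⟨z, hz, hz2⟩ := spectrum.exists_nnnorm_eq_spectralRadius Mc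
  have hsr : spectralRadius ℂ Mc < 1 := by
    rw [← hz2, ← ENNReal.coe_one, ENNReal.coe_lt_coe, ← NNReal.coe_lt_coe]
    exact h z hz
  obtain ⟨c, hc1, hc2⟩ := ENNReal.lt_iff_exists_nnreal_btwn.1 hsr
  have hc2' : c < 1 := by exact_mod_cast hc2
  have gelf := spectrum.pow_nnnorm_pow_one_div_tendsto_nhds_spectralRadius Mc
  have hev : ∀ᶠ k : ℕ in atTop, ((‖Mc ^ k‖₊ : ENNReal)) ^ (1 / (k : ℝ)) < (c : ENNReal) :=
    gelf.eventually_lt_const hc1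
  have hev2 : ∀ᶠ k : ℕ in atTop, ‖M ^ k‖ ≤ (c : ℝ) ^ k := by
    filter_upwards [hev, eventually_ge_atTop 1] with k hk hk1
    have hk0 : (k : ℝ) ≠ 0 := by positivity
    have := ENNReal.rpow_lt_rpow hk (by positivity : (0:ℝ) < (k:ℝ))
    rw [← ENNReal.rpow_mul, one_div_mul_cancel hk0, ENNReal.rpow_one,
      ENNReal.rpow_natCast, ← ENNReal.coe_pow, ENNReal.coe_lt_coe] at this
    have hnorm : ‖Mc ^ k‖₊ = ‖M ^ k‖₊ := by
      rw [hMc, map_pow_complex]; exact norm_map_complex _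
    rw [hnorm] at this
    have : ‖M ^ k‖₊ ≤ c ^ k := this.le
    exact_mod_cast this
  have hgeo : Tendsto (fun k : ℕ => (c : ℝ) ^ k) atTop (nhds 0) :=
    tendsto_pow_atTop_nhds_zero_of_norm_lt_one (by simpa using hc2')
  have := squeeze_zero_norm' (f := fun k : ℕ => M ^ k) (by
    filter_upwards [hev2] with k hk
    exact hk) hgeo
  simpa using this.norm

lemma schur_pow_mulVec_tendsto {n : ℕ} (hn : 0 < n) (M : Matrix (Fin n) (Fin n) ℝ)
    (h : SchurStable M) (v : Fin n → ℝ) :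
    Tendsto (fun t => (M ^ t) *ᵥ v) atTop (nhds 0) := by
  have h0 : Tendsto (fun t : ℕ => ‖M ^ t‖ * ‖v‖) atTop (nhds 0) := by
    simpa using (schur_norm_pow_tendsto hn M h).mul_const ‖v‖
  exact squeeze_zero_norm (fun t => Matrix.linfty_opNorm_mulVec _ _) h0

lemma schur_of_pow_mulVec_tendsto {n : ℕ} (M : Matrix (Fin n) (Fin n) ℝ)
    (h : ∀ v : Fin n → ℝ, Tendsto (fun t => (M ^ t) *ᵥ v) atTop (nhds 0)) :
    SchurStable M := by
  intro μ hμ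
  set Mc := M.map (algebraMap ℝ ℂ) with hMc
  have hent : ∀ i j : Fin n, Tendsto (fun t => (M ^ t) i j) atTop (nhds 0) := by
    intro i j
    have := (h (Pi.single j 1))
    have h2 := (tendsto_pi_nhds.1 this) i
    simpa [Matrix.mulVec_single] using h2
  have hspec : μ ∈ spectrum ℂ (Matrix.toLinAlgEquiv' Mc) := by
    rwa [AlgEquiv.spectrum_eq]
  have heig : Module.End.HasEigenvalue (Matrix.toLin' Mc) μ :=
    Module.End.hasEigenvalue_iff_mem_spectrum.2 hspec
  obtain ⟨w, hw⟩ := heig.exists_hasEigenvector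
  have hww : Mc *ᵥ w = μ • w := by
    have := hw.apply_eq_smul
    simpa [Matrix.toLin'_apply] using this
  have hpow : ∀ t : ℕ, (Mc ^ t) *ᵥ w = μ ^ t • w := by
    intro t
    induction t with
    | zero => simp
    | succ t ih =>
      rw [pow_succ, ← Matrix.mulVec_mulVec, hww, Matrix.mulVec_smul, ih,
        smul_smul, pow_succ, mul_comm]
  obtain ⟨j, hj⟩ : ∃ j, w j ≠ 0 := Function.ne_iff.1 hw.right
  have hentry : Tendsto (fun t => ((Mc ^ t) *ᵥ w) j) atTop (nhds 0) := by
    have hrw : ∀ t, ((Mc ^ t) *ᵥ w) j = ∑ k, ((M ^ t) j k : ℂ) * w k := by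
      intro t
      rw [hMc, map_pow_complex]
      simp [Matrix.mulVec, dotProduct, Matrix.map_apply]
    simp_rw [hrw]
    have h0 : Tendsto (fun t => ∑ k, ((M ^ t) j k : ℂ) * w k) atTop
        (nhds (∑ k : Fin n, (0 : ℂ) * w k)) := by
      refine tendsto_finset_sum _ fun k _ => Tendsto.mul_const _ ?_
      exact (Complex.continuous_ofReal.tendsto 0).comp (by simpa using hent j k)
    simpa using h0
  have hmu : Tendsto (fun t => μ ^ t) atTop (nhds 0) := by
    have hq : ∀ t, μ ^ t = ((Mc ^ t) *ᵥ w) j * (w j)⁻¹ := by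
      intro t; rw [hpow]; field_simp [Pi.smul_apply, smul_eq_mul]; rfl
    simp_rw [hq]
    simpa using hentry.mul_const (w j)⁻¹
  have := tendsto_pow_atTop_nhds_zero_iff.1 (by simpa using hmu.norm : Tendsto
    (fun t => ‖μ‖ ^ t) atTop (nhds 0))
  rwa [abs_of_nonneg (norm_nonneg μ)] at this

end SchurLemmas

/-- Factorization: if every vector killed by `Ψ` is killed by `G`, then `G = Ω * Ψ`. -/
lemma exists_factor {α : Type*} [Fintype α] [DecidableEq α] {q N : ℕ}
    (Ψ : Matrix (Fin q) α ℝ) (G : Matrix (Fin N) α ℝ)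
    (h : ∀ v : α → ℝ, Ψ.mulVec v = 0 → G.mulVec v = 0) :
    ∃ Ω : Matrix (Fin N) (Fin q) ℝ, Ω * Ψ = G := by
  set L := Matrix.toLin' Ψ with hL
  set Gl := Matrix.toLin' G with hGl
  have hker : LinearMap.ker L ≤ LinearMap.ker Gl := by
    intro v hv
    rw [LinearMap.mem_ker] at hv ⊢
    rw [hGl, Matrix.toLin'_apply]
    exact h v (by rwa [hL, Matrix.toLin'_apply] at hv)
  set Gq := (LinearMap.ker L).liftQ Gl hker with hGq
  set f1 : LinearMap.range L →ₗ[ℝ] (Fin N → ℝ) :=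
    Gq.comp (L.quotKerEquivRange.symm : LinearMap.range L →ₗ[ℝ] _) with hf1
  obtain ⟨ω, hω⟩ := f1.exists_extend
  have key : ∀ v : α → ℝ, ω (L v) = Gl v := by
    intro v
    have h1 : L v = (LinearMap.range L).subtype ⟨L v, LinearMap.mem_range_self L v⟩ := rfl
    rw [h1, ← LinearMap.comp_apply, hω, hf1]
    simp only [LinearMap.comp_apply, LinearEquiv.coe_coe]
    rw [LinearMap.quotKerEquivRange_symm_apply_image L v]
    simp [hGq, Submodule.liftQ_apply]
  refine ⟨LinearMap.toMatrix' ω, ?_⟩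
  have hcomp : ω.comp L = Gl := LinearMap.ext key
  calc LinearMap.toMatrix' ω * Ψ
      = LinearMap.toMatrix' ω * LinearMap.toMatrix' L := by rw [hL, LinearMap.toMatrix'_toLin']
    _ = LinearMap.toMatrix' (ω.comp L) := (LinearMap.toMatrix'_comp _ _).symm
    _ = G := by rw [hcomp, hGl, LinearMap.toMatrix'_toLin']

/-- A matrix whose rank equals the cardinality of its row index type has surjective `mulVec`. -/
lemma surjective_of_rank_rows {α : Type*} [Fintype α] [DecidableEq α] {k : ℕ}
    (M : Matrix α (Fin k) ℝ) (h : M.rank = Fintype.card α) :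
    ∀ w : α → ℝ, ∃ c : Fin k → ℝ, M.mulVec c = w := by
  have hrange : LinearMap.range M.mulVecLin = ⊤ := by
    apply Submodule.eq_top_of_finrank_eq
    rw [← Matrix.rank, h, Module.finrank_fintype_fun_eq_card]
  intro w
  have hw : w ∈ LinearMap.range M.mulVecLin := hrange ▸ Submodule.mem_top
  obtain ⟨c, hc⟩ := hw
  exact ⟨c, hc⟩

lemma mulVec_sum_smul {α β : Type*} [Fintype α] [Fintype β] {ι : Type*} [Fintype ι]
    (A : Matrix α β ℝ) (c : ι → ℝ) (v : ι → β → ℝ) :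
    A *ᵥ (∑ j, c j • v j) = ∑ j, c j • (A *ᵥ v j) := by
  simp only [Matrix.mulVec_sum, Matrix.mulVec_smul]

/-- Decomposition of `M *ᵥ stackVec` into the six blocks. -/
lemma mulVec_stack {n m p N : ℕ} (M : Matrix (Fin N) (RowIdx n m p) ℝ)
    (x : ℕ → Fin n → ℝ) (u : ℕ → Fin m → ℝ) (y : ℕ → Fin p → ℝ) (t : ℕ) :
    M *ᵥ stackVec x u y t =
      (Matrix.of fun i j => M i (Sum.inl (Sum.inl j))) *ᵥ x t
      + (Matrix.of fun i j => M i (Sum.inl (Sum.inr j))) *ᵥ x (t + 1)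
      + (Matrix.of fun i j => M i (Sum.inr (Sum.inl (Sum.inl j)))) *ᵥ u t
      + (Matrix.of fun i j => M i (Sum.inr (Sum.inl (Sum.inr j)))) *ᵥ u (t + 1)
      + (Matrix.of fun i j => M i (Sum.inr (Sum.inr (Sum.inl j)))) *ᵥ y t
      + (Matrix.of fun i j => M i (Sum.inr (Sum.inr (Sum.inr j)))) *ᵥ y (t + 1) := by
  funext i
  simp [Matrix.mulVec, dotProduct, Fintype.sum_sum_type, stackVec, add_assoc]

/-- Extracting a block of a product. -/
lemma mul_block {N q : ℕ} {α β : Type*} [Fintype β] [Fintype α] (Ω : Matrix (Fin N) (Fin q) ℝ)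
    (Ψ : Matrix (Fin q) β ℝ) (f : α → β) :
    Ω * (Matrix.of fun i j => Ψ i (f j)) = Matrix.of fun i j => (Ω * Ψ) i (f j) := by
  ext i j
  simp [Matrix.mul_apply]

/-- Under the Assumption, the stacked vector of any solution lies in the
column space of the data matrix. -/
lemma stack_mem_range {n m p r : ℕ}
    (A : Matrix (Fin n) (Fin n) ℝ) (B : Matrix (Fin n) (Fin m) ℝ)
    (Cm : Matrix (Fin p) (Fin n) ℝ) (Dm : Matrix (Fin p) (Fin m) ℝ)
    (E : Matrix (Fin n) (Fin r) ℝ) (F : Matrix (Fin p) (Fin r) ℝ)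
    (T : ℕ) (hT : 2 ≤ T)
    (xd : ℕ → Fin n → ℝ) (ud : ℕ → Fin m → ℝ) (yd : ℕ → Fin p → ℝ)
    (dd : ℕ → Fin r → ℝ)
    (hgen1 : ∀ t : ℕ, t + 2 ≤ T →
      xd (t + 1) = A.mulVec (xd t) + B.mulVec (ud t) + E.mulVec (dd t))
    (hgen2 : ∀ t : ℕ, t + 1 ≤ T →
      yd t = Cm.mulVec (xd t) + Dm.mulVec (ud t) + F.mulVec (dd t))
    (hassump : (HistMat T xd ud dd).rank = n + ((m + m) + (r + r)))
    (x : ℕ → Fin n → ℝ) (u : ℕ → Fin m → ℝ) (y : ℕ → Fin p → ℝ)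
    (d : ℕ → Fin r → ℝ) (hsol : SigmaSol A B Cm Dm E F x u y d) (t : ℕ) :
    ∃ c : Fin (T - 1) → ℝ, (PhiD T xd ud yd).mulVec c = stackVec x u y t := by
  have hcard : (HistMat T xd ud dd).rank
      = Fintype.card (Fin n ⊕ ((Fin m ⊕ Fin m) ⊕ (Fin r ⊕ Fin r))) := by
    simpa using hassump
  set w : (Fin n ⊕ ((Fin m ⊕ Fin m) ⊕ (Fin r ⊕ Fin r))) → ℝ :=
    Sum.elim (x t) (Sum.elim (Sum.elim (u t) (u (t + 1))) (Sum.elim (d t) (d (t + 1)))) with hw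
  obtain ⟨c, hc⟩ := surjective_of_rank_rows _ hcard w
  -- extract blockwise identities
  have hxp : ∑ j, c j • xd j.1 = x t := by
    funext a
    have := congrFun hc (Sum.inl a)
    simp only [HistMat, Matrix.mulVec, dotProduct, Matrix.of_apply, hw,
      Sum.elim_inl] at this
    rw [Finset.sum_apply]
    simpa [mul_comm] using this
  have hup : ∑ j, c j • ud j.1 = u t := by
    funext a
    have := congrFun hc (Sum.inr (Sum.inl (Sum.inl a)))
    simp only [HistMat, Matrix.mulVec, dotProduct, Matrix.of_apply, hw,
      Sum.elim_inr, Sum.elim_inl] at this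
    rw [Finset.sum_apply]
    simpa [mul_comm] using this
  have huf : ∑ j, c j • ud (j.1 + 1) = u (t + 1) := by
    funext a
    have := congrFun hc (Sum.inr (Sum.inl (Sum.inr a)))
    simp only [HistMat, Matrix.mulVec, dotProduct, Matrix.of_apply, hw,
      Sum.elim_inr, Sum.elim_inl] at this
    rw [Finset.sum_apply]
    simpa [mul_comm] using this
  have hdp : ∑ j, c j • dd j.1 = d t := by
    funext a
    have := congrFun hc (Sum.inr (Sum.inr (Sum.inl a)))
    simp only [HistMat, Matrix.mulVec, dotProduct, Matrix.of_apply, hw,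
      Sum.elim_inr, Sum.elim_inl] at this
    rw [Finset.sum_apply]
    simpa [mul_comm] using this
  have hdf : ∑ j, c j • dd (j.1 + 1) = d (t + 1) := by
    funext a
    have := congrFun hc (Sum.inr (Sum.inr (Sum.inr a)))
    simp only [HistMat, Matrix.mulVec, dotProduct, Matrix.of_apply, hw,
      Sum.elim_inr] at this
    rw [Finset.sum_apply]
    simpa [mul_comm] using this
  -- derived identities
  have hbound : ∀ j : Fin (T - 1), j.1 + 2 ≤ T := by
    intro j; have := j.isLt; omega
  have hbound1 : ∀ j : Fin (T - 1), j.1 + 1 ≤ T := by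
    intro j; have := j.isLt; omega
  have hxf : ∑ j, c j • xd (j.1 + 1) = x (t + 1) := by
    have hstep : ∀ j : Fin (T - 1),
        c j • xd (j.1 + 1) = c j • (A *ᵥ xd j.1 + B *ᵥ ud j.1 + E *ᵥ dd j.1) := by
      intro j; rw [hgen1 j.1 (hbound j)]
    rw [Finset.sum_congr rfl fun j _ => hstep j]
    simp only [smul_add, Finset.sum_add_distrib]
    rw [← mulVec_sum_smul, ← mulVec_sum_smul, ← mulVec_sum_smul, hxp, hup, hdp]
    exact ((hsol t).1).symm
  have hyp : ∑ j, c j • yd j.1 = y t := by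
    have hstep : ∀ j : Fin (T - 1),
        c j • yd j.1 = c j • (Cm *ᵥ xd j.1 + Dm *ᵥ ud j.1 + F *ᵥ dd j.1) := by
      intro j; rw [hgen2 j.1 (hbound1 j)]
    rw [Finset.sum_congr rfl fun j _ => hstep j]
    simp only [smul_add, Finset.sum_add_distrib]
    rw [← mulVec_sum_smul, ← mulVec_sum_smul, ← mulVec_sum_smul, hxp, hup, hdp]
    exact ((hsol t).2).symm
  have hyf : ∑ j, c j • yd (j.1 + 1) = y (t + 1) := by
    have hstep : ∀ j : Fin (T - 1),
        c j • yd (j.1 + 1) = c j • (Cm *ᵥ xd (j.1 + 1) + Dm *ᵥ ud (j.1 + 1)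
          + F *ᵥ dd (j.1 + 1)) := by
      intro j; rw [hgen2 (j.1 + 1) (hbound j)]
    rw [Finset.sum_congr rfl fun j _ => hstep j]
    simp only [smul_add, Finset.sum_add_distrib]
    rw [← mulVec_sum_smul, ← mulVec_sum_smul, ← mulVec_sum_smul, hxf, huf, hdf]
    exact ((hsol (t + 1)).2).symm
  refine ⟨c, ?_⟩
  funext k
  have hsum : ∀ (g : Fin (T - 1) → ℝ),
      (∑ j, g j * c j) = ∑ j, c j * g j := by
    intro g; exact Finset.sum_congr rfl fun j _ => mul_comm _ _
  rcases k with (⟨a⟩ | ⟨a⟩) | ((⟨a⟩ | ⟨a⟩) | (⟨a⟩ | ⟨a⟩)) <;>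
    simp only [PhiD, Matrix.mulVec, dotProduct, Matrix.of_apply, stackVec] <;>
    [ (rw [hsum]; rw [← congrFun hxp a, Finset.sum_apply]; simp [smul_eq_mul]);
      (rw [hsum]; rw [← congrFun hxf a, Finset.sum_apply]; simp [smul_eq_mul]);
      (rw [hsum]; rw [← congrFun hup a, Finset.sum_apply]; simp [smul_eq_mul]);
      (rw [hsum]; rw [← congrFun huf a, Finset.sum_apply]; simp [smul_eq_mul]);
      (rw [hsum]; rw [← congrFun hyp a, Finset.sum_apply]; simp [smul_eq_mul]);
      (rw [hsum]; rw [← congrFun hyf a, Finset.sum_apply]; simp [smul_eq_mul])]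

/-- From `Ω`, `Astar` satisfying the block identities, construct a UIO. -/
lemma build_UIO {n m p r q : ℕ} (hn : 0 < n)
    (A : Matrix (Fin n) (Fin n) ℝ) (B : Matrix (Fin n) (Fin m) ℝ)
    (Cm : Matrix (Fin p) (Fin n) ℝ) (Dm : Matrix (Fin p) (Fin m) ℝ)
    (E : Matrix (Fin n) (Fin r) ℝ) (F : Matrix (Fin p) (Fin r) ℝ)
    (T : ℕ) (hT : 2 ≤ T)
    (xd : ℕ → Fin n → ℝ) (ud : ℕ → Fin m → ℝ) (yd : ℕ → Fin p → ℝ)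
    (dd : ℕ → Fin r → ℝ)
    (hgen1 : ∀ t : ℕ, t + 2 ≤ T →
      xd (t + 1) = A.mulVec (xd t) + B.mulVec (ud t) + E.mulVec (dd t))
    (hgen2 : ∀ t : ℕ, t + 1 ≤ T →
      yd t = Cm.mulVec (xd t) + Dm.mulVec (ud t) + F.mulVec (dd t))
    (hassump : (HistMat T xd ud dd).rank = n + ((m + m) + (r + r)))
    (Ψ : Matrix (Fin q) (RowIdx n m p) ℝ)
    (hΨ : ∀ v : RowIdx n m p → ℝ, Ψ.mulVec v = 0 ↔
      ∃ c : Fin (T - 1) → ℝ, v = (PhiD T xd ud yd).mulVec c)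
    (Ω : Matrix (Fin n) (Fin q) ℝ) (Astar : Matrix (Fin n) (Fin n) ℝ)
    (hSch : SchurStable Astar)
    (hVp : Ω * Matrix.of (fun i j => Ψ i (Sum.inl (Sum.inl j))) = -Astar)
    (hVf : Ω * Matrix.of (fun i j => Ψ i (Sum.inl (Sum.inr j))) = 1) :
    ∃ (Auio : Matrix (Fin n) (Fin n) ℝ) (Bu : Matrix (Fin n) (Fin m) ℝ)
      (By : Matrix (Fin n) (Fin p) ℝ) (Du : Matrix (Fin n) (Fin m) ℝ)
      (Dy : Matrix (Fin n) (Fin p) ℝ), IsUIO A B Cm Dm E F Auio Bu By Du Dy := by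
  set P1 := Ω * Matrix.of (fun i j => Ψ i (Sum.inr (Sum.inl (Sum.inl j)))) with hP1
  set P2 := Ω * Matrix.of (fun i j => Ψ i (Sum.inr (Sum.inl (Sum.inr j)))) with hP2
  set Q1 := Ω * Matrix.of (fun i j => Ψ i (Sum.inr (Sum.inr (Sum.inl j)))) with hQ1
  set Q2 := Ω * Matrix.of (fun i j => Ψ i (Sum.inr (Sum.inr (Sum.inr j)))) with hQ2
  -- the key dynamics identity satisfied by every solution of Σ
  have K : ∀ (x : ℕ → Fin n → ℝ) (u : ℕ → Fin m → ℝ) (y : ℕ → Fin p → ℝ)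
      (d : ℕ → Fin r → ℝ), SigmaSol A B Cm Dm E F x u y d → ∀ t : ℕ,
      x (t + 1) = Astar *ᵥ x t - P1 *ᵥ u t - P2 *ᵥ u (t + 1)
        - Q1 *ᵥ y t - Q2 *ᵥ y (t + 1) := by
    intro x u y d hsol t
    obtain ⟨c, hc⟩ := stack_mem_range A B Cm Dm E F T hT xd ud yd dd hgen1 hgen2 hassump
      x u y d hsol t
    have hker : Ψ *ᵥ stackVec x u y t = 0 := (hΨ _).2 ⟨c, hc.symm⟩
    have h0 : (Ω * Ψ) *ᵥ stackVec x u y t = 0 := by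
      rw [← Matrix.mulVec_mulVec, hker, Matrix.mulVec_zero]
    rw [mulVec_stack] at h0
    rw [← mul_block Ω Ψ (fun j => Sum.inl (Sum.inl j)), ← mul_block Ω Ψ
        (fun j => Sum.inl (Sum.inr j)),
      ← mul_block Ω Ψ (fun j => Sum.inr (Sum.inl (Sum.inl j))),
      ← mul_block Ω Ψ (fun j => Sum.inr (Sum.inl (Sum.inr j))),
      ← mul_block Ω Ψ (fun j => Sum.inr (Sum.inr (Sum.inl j))),
      ← mul_block Ω Ψ (fun j => Sum.inr (Sum.inr (Sum.inr j)))] at h0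
    rw [hVp, hVf, ← hP1, ← hP2, ← hQ1, ← hQ2, Matrix.neg_mulVec, Matrix.one_mulVec] at h0
    linear_combination h0
  refine ⟨Astar, -P1 - Astar * P2, -Q1 - Astar * Q2, -P2, -Q2, ?_, ?_⟩
  · -- acceptor
    intro x u y d hsol
    refine ⟨fun t => x t + P2 *ᵥ u t + Q2 *ᵥ y t, fun t => ⟨?_, ?_⟩⟩
    · have hK := K x u y d hsol t
      simp only [Matrix.sub_mulVec, Matrix.add_mulVec, Matrix.neg_mulVec,
        Matrix.mulVec_add, Matrix.mulVec_sub, Matrix.mulVec_neg, ← Matrix.mulVec_mulVec]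
      linear_combination hK
    · simp only [Matrix.neg_mulVec]
      abel
  · -- error convergence
    intro x u y d xh z hsol hobs
    have herr : ∀ t, x t - xh t = (Astar ^ t) *ᵥ (x 0 - xh 0) := by
      intro t
      induction t with
      | zero => simp
      | succ t ih =>
        have hK := K x u y d hsol t
        have h1 := (hobs (t + 1)).2
        have h2 := (hobs t).1
        have h3 := (hobs t).2
        have hstep : x (t + 1) - xh (t + 1) = Astar *ᵥ (x t - xh t) := by
          rw [hK, h1, h2, h3]
          simp only [Matrix.sub_mulVec, Matrix.add_mulVec, Matrix.neg_mulVec,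
            Matrix.mulVec_add, Matrix.mulVec_sub, Matrix.mulVec_neg,
            ← Matrix.mulVec_mulVec]
          abel
        rw [hstep, ih, Matrix.mulVec_mulVec, ← pow_succ']
    have := schur_pow_mulVec_tendsto hn Astar hSch (x 0 - xh 0)
    exact Tendsto.congr (fun t => (herr t).symm) this

lemma necessity {n m p r q : ℕ}
    (A : Matrix (Fin n) (Fin n) ℝ) (B : Matrix (Fin n) (Fin m) ℝ)
    (Cm : Matrix (Fin p) (Fin n) ℝ) (Dm : Matrix (Fin p) (Fin m) ℝ)
    (E : Matrix (Fin n) (Fin r) ℝ) (F : Matrix (Fin p) (Fin r) ℝ)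
    (T : ℕ) (hT : 2 ≤ T)
    (xd : ℕ → Fin n → ℝ) (ud : ℕ → Fin m → ℝ) (yd : ℕ → Fin p → ℝ)
    (dd : ℕ → Fin r → ℝ)
    (hgen1 : ∀ t : ℕ, t + 2 ≤ T →
      xd (t + 1) = A.mulVec (xd t) + B.mulVec (ud t) + E.mulVec (dd t))
    (hgen2 : ∀ t : ℕ, t + 1 ≤ T →
      yd t = Cm.mulVec (xd t) + Dm.mulVec (ud t) + F.mulVec (dd t))
    (Auio : Matrix (Fin n) (Fin n) ℝ) (Bu : Matrix (Fin n) (Fin m) ℝ)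
    (By : Matrix (Fin n) (Fin p) ℝ) (Du : Matrix (Fin n) (Fin m) ℝ)
    (Dy : Matrix (Fin n) (Fin p) ℝ)
    (hUIO : IsUIO A B Cm Dm E F Auio Bu By Du Dy)
    (Ψ : Matrix (Fin q) (RowIdx n m p) ℝ)
    (hΨ : ∀ v : RowIdx n m p → ℝ, Ψ.mulVec v = 0 ↔
      ∃ c : Fin (T - 1) → ℝ, v = (PhiD T xd ud yd).mulVec c) :
    ∃ (Ω : Matrix (Fin n) (Fin q) ℝ) (Astar : Matrix (Fin n) (Fin n) ℝ),
      SchurStable Astar ∧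
      Ω * Matrix.of (fun i j => Ψ i (Sum.inl (Sum.inl j))) = -Astar ∧
      Ω * Matrix.of (fun i j => Ψ i (Sum.inl (Sum.inr j))) = 1 := by
  -- Auio is Schur stable
  have hsys0 : SigmaSol A B Cm Dm E F (fun _ => 0) (fun _ => 0) (fun _ => 0) (fun _ => 0) := by
    intro t
    constructor <;> simp
  have hS : SchurStable Auio := by
    apply schur_of_pow_mulVec_tendsto
    intro v
    have hobs : ObsSol Auio Bu By Du Dy
        (fun t => (Auio ^ t) *ᵥ v + Du *ᵥ (fun _ => (0:ℝ)) + Dy *ᵥ (fun _ => (0:ℝ)))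
        (fun _ => 0) (fun _ => 0) (fun t => (Auio ^ t) *ᵥ v) := by
      intro t
      refine ⟨?_, rfl⟩
      show (Auio ^ (t + 1)) *ᵥ v = _
      rw [pow_succ', ← Matrix.mulVec_mulVec]
      simp
    have h2 := hUIO.2 _ _ _ _ _ _ hsys0 hobs
    have h3 := h2.neg
    rw [neg_zero] at h3
    refine Tendsto.congr (fun t => ?_) h3
    simp only [show (fun _ : Fin m => (0:ℝ)) = 0 from rfl,
      show (fun _ : Fin p => (0:ℝ)) = 0 from rfl, Matrix.mulVec_zero, add_zero,
      zero_sub, neg_neg]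
  -- the structural matrix G
  set G : Matrix (Fin n) (RowIdx n m p) ℝ := Matrix.of fun i k =>
    match k with
    | Sum.inl (Sum.inl a) => (-Auio) i a
    | Sum.inl (Sum.inr a) => (1 : Matrix (Fin n) (Fin n) ℝ) i a
    | Sum.inr (Sum.inl (Sum.inl a)) => (Auio * Du - Bu) i a
    | Sum.inr (Sum.inl (Sum.inr a)) => (-Du) i a
    | Sum.inr (Sum.inr (Sum.inl a)) => (Auio * Dy - By) i a
    | Sum.inr (Sum.inr (Sum.inr a)) => (-Dy) i a
    with hG
  -- G annihilates stacked vectors of solutions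
  have hGstack : ∀ (x : ℕ → Fin n → ℝ) (u : ℕ → Fin m → ℝ) (y : ℕ → Fin p → ℝ)
      (d : ℕ → Fin r → ℝ), SigmaSol A B Cm Dm E F x u y d → ∀ t : ℕ,
      G *ᵥ stackVec x u y t = 0 := by
    intro x u y d hsol t
    obtain ⟨z, hz⟩ := hUIO.1 x u y d hsol
    rw [mulVec_stack]
    have e1 : (Matrix.of fun i j => G i (Sum.inl (Sum.inl j))) = -Auio := rfl
    have e2 : (Matrix.of fun i j => G i (Sum.inl (Sum.inr j)))
        = (1 : Matrix (Fin n) (Fin n) ℝ) := rfl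
    have e3 : (Matrix.of fun i j => G i (Sum.inr (Sum.inl (Sum.inl j)))) = Auio * Du - Bu := rfl
    have e4 : (Matrix.of fun i j => G i (Sum.inr (Sum.inl (Sum.inr j)))) = -Du := rfl
    have e5 : (Matrix.of fun i j => G i (Sum.inr (Sum.inr (Sum.inl j)))) = Auio * Dy - By := rfl
    have e6 : (Matrix.of fun i j => G i (Sum.inr (Sum.inr (Sum.inr j)))) = -Dy := rfl
    rw [e1, e2, e3, e4, e5, e6]
    have h1 := (hz t).2
    have h2 := (hz (t + 1)).2
    have h3 := (hz t).1
    rw [Matrix.one_mulVec, h1, h2, h3]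
    simp only [Matrix.sub_mulVec, Matrix.add_mulVec, Matrix.neg_mulVec,
      Matrix.mulVec_add, Matrix.mulVec_sub, Matrix.mulVec_neg, ← Matrix.mulVec_mulVec]
    abel
  -- the extension of the data to an infinite solution
  set x' : ℕ → Fin n → ℝ := fun s =>
    Nat.rec (xd 0) (fun s prev => A *ᵥ prev + B *ᵥ ud s + E *ᵥ dd s) s with hx'def
  set y' : ℕ → Fin p → ℝ := fun s => Cm *ᵥ x' s + Dm *ᵥ ud s + F *ᵥ dd s with hy'def
  have hsol' : SigmaSol A B Cm Dm E F x' ud y' dd := fun t => ⟨rfl, rfl⟩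
  have hx' : ∀ s, s + 1 ≤ T → x' s = xd s := by
    intro s
    induction s with
    | zero => intro _; rfl
    | succ s ih =>
      intro hs
      have hxs : x' (s + 1) = A *ᵥ x' s + B *ᵥ ud s + E *ᵥ dd s := rfl
      rw [hxs, ih (by omega), ← hgen1 s (by omega)]
  have hy' : ∀ s, s + 1 ≤ T → y' s = yd s := by
    intro s hs
    rw [hy'def]
    simp only []
    rw [hx' s hs, ← hgen2 s hs]
  -- kernel inclusion
  have hkerG : ∀ v : RowIdx n m p → ℝ, Ψ.mulVec v = 0 → G.mulVec v = 0 := by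
    intro v hv
    obtain ⟨c, rfl⟩ := (hΨ v).1 hv
    have hcol : (PhiD T xd ud yd).mulVec c = ∑ t : Fin (T - 1), c t • stackVec x' ud y' t.1 := by
      funext k
      rw [Finset.sum_apply]
      have hb : ∀ t : Fin (T - 1), t.1 + 1 ≤ T := fun t => by have := t.isLt; omega
      have hb2 : ∀ t : Fin (T - 1), t.1 + 2 ≤ T := fun t => by have := t.isLt; omega
      rcases k with (⟨a⟩ | ⟨a⟩) | ((⟨a⟩ | ⟨a⟩) | (⟨a⟩ | ⟨a⟩)) <;>
        simp only [PhiD, Matrix.mulVec, dotProduct, Matrix.of_apply, stackVec,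
          Pi.smul_apply, smul_eq_mul] <;>
        refine Finset.sum_congr rfl fun t _ => ?_
      · rw [hx' t.1 (hb t)]; ring
      · rw [hx' (t.1 + 1) (hb2 t)]; ring
      · ring
      · ring
      · rw [hy' t.1 (hb t)]; ring
      · rw [hy' (t.1 + 1) (hb2 t)]; ring
    rw [hcol, mulVec_sum_smul]
    refine Finset.sum_eq_zero fun t _ => ?_
    rw [hGstack x' ud y' dd hsol' t.1, smul_zero]
  obtain ⟨Ω, hΩ⟩ := exists_factor Ψ G hkerG
  refine ⟨Ω, Auio, hS, ?_, ?_⟩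
  · rw [mul_block, hΩ]
    rfl
  · rw [mul_block, hΩ]
    rfl

theorem theorem3 {n m p r : ℕ} (hn : 0 < n) (hm : 0 < m) (hp : 0 < p) (hr : 0 < r)
    (A : Matrix (Fin n) (Fin n) ℝ) (B : Matrix (Fin n) (Fin m) ℝ)
    (Cm : Matrix (Fin p) (Fin n) ℝ) (Dm : Matrix (Fin p) (Fin m) ℝ)
    (E : Matrix (Fin n) (Fin r) ℝ) (F : Matrix (Fin p) (Fin r) ℝ)
    (hEF : (Matrix.fromRows E F).rank = r)
    (T : ℕ) (hT : 2 ≤ T)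
    (xd : ℕ → Fin n → ℝ) (ud : ℕ → Fin m → ℝ) (yd : ℕ → Fin p → ℝ)
    (dd : ℕ → Fin r → ℝ)
    (hgen1 : ∀ t : ℕ, t + 2 ≤ T →
      xd (t + 1) = A.mulVec (xd t) + B.mulVec (ud t) + E.mulVec (dd t))
    (hgen2 : ∀ t : ℕ, t + 1 ≤ T →
      yd t = Cm.mulVec (xd t) + Dm.mulVec (ud t) + F.mulVec (dd t))
    (hassump : (HistMat T xd ud dd).rank = n + ((m + m) + (r + r))) :
    (∃ (Auio : Matrix (Fin n) (Fin n) ℝ) (Bu : Matrix (Fin n) (Fin m) ℝ)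
      (By : Matrix (Fin n) (Fin p) ℝ) (Du : Matrix (Fin n) (Fin m) ℝ)
      (Dy : Matrix (Fin n) (Fin p) ℝ), IsUIO A B Cm Dm E F Auio Bu By Du Dy) ↔
      ∀ (q : ℕ) (Ψ : Matrix (Fin q) (RowIdx n m p) ℝ),
        (∀ v : RowIdx n m p → ℝ, Ψ.mulVec v = 0 ↔
          ∃ c : Fin (T - 1) → ℝ, v = (PhiD T xd ud yd).mulVec c) →
        ∃ (Ω : Matrix (Fin n) (Fin q) ℝ) (Astar : Matrix (Fin n) (Fin n) ℝ),
          SchurStable Astar ∧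
          Ω * Matrix.of (fun i j => Ψ i (Sum.inl (Sum.inl j))) = -Astar ∧
          Ω * Matrix.of (fun i j => Ψ i (Sum.inl (Sum.inr j))) = 1 := by
  constructor
  · rintro ⟨Auio, Bu, By, Du, Dy, hUIO⟩ q Ψ hΨ
    exact necessity A B Cm Dm E F T hT xd ud yd dd hgen1 hgen2 Auio Bu By Du Dy hUIO Ψ hΨ
  · intro h
    -- construct a matrix Ψ whose kernel is the column space of Φ_d
    set U : Submodule ℝ (RowIdx n m p → ℝ) :=
      LinearMap.range (Matrix.toLin' (PhiD T xd ud yd)) with hU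
    obtain ⟨W, hW⟩ := U.exists_isCompl
    set π := W.linearProjOfIsCompl U hW.symm with hπ
    set f : (RowIdx n m p → ℝ) →ₗ[ℝ] (RowIdx n m p → ℝ) := W.subtype.comp π with hf
    have hkerf : LinearMap.ker f = U := by
      rw [hf, LinearMap.ker_comp, Submodule.ker_subtype, Submodule.comap_bot]
      exact Submodule.ker_projectionOnto hW.symm
    set Mfull := LinearMap.toMatrix' f with hMfull
    set e := Fintype.equivFin (RowIdx n m p) with he
    set q := Fintype.card (RowIdx n m p) with hq
    set Ψ : Matrix (Fin q) (RowIdx n m p) ℝ :=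
      Matrix.of fun i j => Mfull (e.symm i) j with hΨdef
    have hΨ : ∀ v : RowIdx n m p → ℝ, Ψ.mulVec v = 0 ↔
        ∃ c : Fin (T - 1) → ℝ, v = (PhiD T xd ud yd).mulVec c := by
      intro v
      have hMv : ∀ k, (Mfull *ᵥ v) k = f v k := by
        intro k
        rw [hMfull, ← Matrix.toLin'_apply, Matrix.toLin'_toMatrix']
      have h1 : Ψ.mulVec v = 0 ↔ f v = 0 := by
        constructor
        · intro hvv
          funext k
          have := congrFun hvv (e k)
          simp only [Ψ, Matrix.mulVec, dotProduct, Matrix.of_apply,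
            Equiv.symm_apply_apply, Pi.zero_apply] at this
          rw [← hMv k]
          simpa [Matrix.mulVec, dotProduct] using this
        · intro hvv
          funext i
          have := congrFun hvv (e.symm i)
          rw [← hMv (e.symm i)] at this
          simpa [Ψ, Matrix.mulVec, dotProduct] using this
      rw [h1]
      have h2 : f v = 0 ↔ v ∈ U := by
        rw [← hkerf, LinearMap.mem_ker]
      rw [h2, hU]
      constructor
      · rintro ⟨c, hc⟩
        exact ⟨c, by rw [← hc, Matrix.toLin'_apply]⟩
      · rintro ⟨c, hc⟩
        exact ⟨c, by rw [hc, Matrix.toLin'_apply]⟩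
    obtain ⟨Ω, Astar, hSch, hVp, hVf⟩ := h q Ψ hΨ
    exact build_UIO hn A B Cm Dm E F T hT xd ud yd dd hgen1 hgen2 hassump Ψ hΨ Ω Astar
      hSch hVp hVf
end
end

section
/- (Theorem 3, 'only if' direction) Suppose the historical data are generated by Σ, and suppose the observer candidate Σ̂ with matrices A_UIO, Bu, By, Du, Dy is a UIO for Σ. Then for every integer q and every matrix Ψ = [V_p V_f W_p W_f R_p R_f] ∈ ℝ^{q×2(n+m+p)} (with blocks V_p, V_f ∈ ℝ^{q×n}, W_p, W_f ∈ ℝ^{q×m}, R_p, R_f ∈ ℝ^{q×p}) whose kernel equals the column space of Φ_d, there exists a matrix Ω ∈ ℝ^{n×q} such that Ω V_p = −A_UIO and Ω V_f = I_n, where A_UIO is Schur stable. -/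
open Matrix Filter

noncomputable section

section AuxLemmas

lemma factor_through {V W U : Type*} [AddCommGroup V] [AddCommGroup W] [AddCommGroup U]
    [Module ℝ V] [Module ℝ W] [Module ℝ U]
    (f : V →ₗ[ℝ] W) (g : V →ₗ[ℝ] U) (h : LinearMap.ker f ≤ LinearMap.ker g) :
    ∃ h' : W →ₗ[ℝ] U, ∀ v, h' (f v) = g v := by
  obtain ⟨h', hh'⟩ := LinearMap.exists_extend
    (((LinearMap.ker f).liftQ g h) ∘ₗ (f.quotKerEquivRange.symm.toLinearMap))
  refine ⟨h', fun v => ?_⟩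
  have h2 : h' (f v) = (h'.comp (LinearMap.range f).subtype)
      ⟨f v, LinearMap.mem_range_self f v⟩ := rfl
  rw [h2, hh']
  simp [LinearMap.quotKerEquivRange_symm_apply_image, Submodule.liftQ_apply,
    Submodule.mkQ_apply]

lemma schur_of_pow_tendsto {n : ℕ} (M : Matrix (Fin n) (Fin n) ℝ)
    (h : ∀ z0 : Fin n → ℝ, Tendsto (fun t => (M ^ t).mulVec z0) atTop (nhds 0)) :
    SchurStable M := by
  intro μ hμ
  by_contra hge
  push_neg at hge
  have hent : ∀ i j, Tendsto (fun t => (M ^ t) i j) atTop (nhds 0) := by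
    intro i j
    have := (tendsto_pi_nhds.mp (h (Pi.single j 1))) i
    simpa using this
  set Mc := M.map (algebraMap ℝ ℂ) with hMc
  have hdet : (algebraMap ℂ (Matrix (Fin n) (Fin n) ℂ) μ - Mc).det = 0 := by
    have h1 : ¬ IsUnit (algebraMap ℂ (Matrix (Fin n) (Fin n) ℂ) μ - Mc) := hμ
    rw [Matrix.isUnit_iff_isUnit_det] at h1
    simpa [isUnit_iff_ne_zero] using h1
  obtain ⟨v, hv0, hv⟩ := (Matrix.exists_mulVec_eq_zero_iff).mpr hdet
  have heig : Mc.mulVec v = μ • v := by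
    rw [Matrix.sub_mulVec] at hv
    have h3 : (algebraMap ℂ (Matrix (Fin n) (Fin n) ℂ) μ).mulVec v = μ • v := by
      rw [Algebra.algebraMap_eq_smul_one]
      rw [Matrix.smul_mulVec, Matrix.one_mulVec]
    rw [h3] at hv
    exact (sub_eq_zero.mp hv).symm
  have hmap : ∀ t, Mc ^ t = (M ^ t).map (algebraMap ℝ ℂ) := by
    intro t
    induction t with
    | zero => simp
    | succ s ih => rw [pow_succ, pow_succ, ih, hMc, Matrix.map_mul]
  have heigpow : ∀ t, (Mc ^ t).mulVec v = μ ^ t • v := by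
    intro t
    induction t with
    | zero => simp
    | succ s ih =>
        rw [pow_succ', ← Matrix.mulVec_mulVec, ih, Matrix.mulVec_smul, heig,
          smul_smul, ← pow_succ]
  obtain ⟨i, hvi⟩ := Function.ne_iff.mp hv0
  have hcomp : Tendsto (fun t => ((Mc ^ t).mulVec v) i) atTop (nhds 0) := by
    have hform : ∀ t, ((Mc ^ t).mulVec v) i
        = ∑ j, (algebraMap ℝ ℂ ((M ^ t) i j)) * v j := by
      intro t
      rw [hmap t]
      simp [Matrix.mulVec, dotProduct, Matrix.map_apply]
    simp only [hform]
    have : Tendsto (fun t => ∑ j, (algebraMap ℝ ℂ ((M ^ t) i j)) * v j) atTop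
        (nhds (∑ j : Fin n, (0 : ℂ) * v j)) := by
      refine tendsto_finset_sum _ (fun j _ => ?_)
      exact (((Complex.continuous_ofReal.tendsto 0).comp (hent i j)).mul_const (v j))
    simpa using this
  have hmu : Tendsto (fun t => μ ^ t * v i) atTop (nhds 0) := by
    have : ∀ t, ((Mc ^ t).mulVec v) i = μ ^ t * v i := by
      intro t; rw [heigpow t]; rfl
    simpa only [this] using hcomp
  have hnorm : Tendsto (fun t => ‖μ ^ t * v i‖) atTop (nhds 0) := by
    simpa using hmu.norm
  have hlt : ∀ᶠ t in atTop, ‖μ ^ t * v i‖ < ‖v i‖ :=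
    hnorm.eventually_lt_const (by simpa using hvi)
  obtain ⟨t, ht⟩ := hlt.exists
  have : ‖v i‖ ≤ ‖μ ^ t * v i‖ := by
    rw [norm_mul, norm_pow]
    nlinarith [one_le_pow₀ hge (n := t), norm_nonneg (v i), norm_pos_iff.mpr hvi]
  linarith

end AuxLemmas
theorem theorem3_only_if {n m p r : ℕ} (hn : 0 < n) (hm : 0 < m) (hp : 0 < p) (hr : 0 < r)
    (A : Matrix (Fin n) (Fin n) ℝ) (B : Matrix (Fin n) (Fin m) ℝ)
    (Cm : Matrix (Fin p) (Fin n) ℝ) (Dm : Matrix (Fin p) (Fin m) ℝ)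
    (E : Matrix (Fin n) (Fin r) ℝ) (F : Matrix (Fin p) (Fin r) ℝ)
    (hEF : (Matrix.fromRows E F).rank = r)
    (Auio : Matrix (Fin n) (Fin n) ℝ) (Bu : Matrix (Fin n) (Fin m) ℝ)
    (By : Matrix (Fin n) (Fin p) ℝ) (Du : Matrix (Fin n) (Fin m) ℝ)
    (Dy : Matrix (Fin n) (Fin p) ℝ)
    (T : ℕ) (hT : 2 ≤ T)
    (xd : ℕ → Fin n → ℝ) (ud : ℕ → Fin m → ℝ) (yd : ℕ → Fin p → ℝ)
    (dd : ℕ → Fin r → ℝ)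
    (hgen1 : ∀ t : ℕ, t + 2 ≤ T →
      xd (t + 1) = A.mulVec (xd t) + B.mulVec (ud t) + E.mulVec (dd t))
    (hgen2 : ∀ t : ℕ, t + 1 ≤ T →
      yd t = Cm.mulVec (xd t) + Dm.mulVec (ud t) + F.mulVec (dd t))
    (huio : IsUIO A B Cm Dm E F Auio Bu By Du Dy) :
    SchurStable Auio ∧
      ∀ (q : ℕ) (Ψ : Matrix (Fin q) (RowIdx n m p) ℝ),
        (∀ v : RowIdx n m p → ℝ, Ψ.mulVec v = 0 ↔
          ∃ c : Fin (T - 1) → ℝ, v = (PhiD T xd ud yd).mulVec c) →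
        ∃ Ω : Matrix (Fin n) (Fin q) ℝ,
          Ω * Matrix.of (fun i j => Ψ i (Sum.inl (Sum.inl j))) = -Auio ∧
          Ω * Matrix.of (fun i j => Ψ i (Sum.inl (Sum.inr j))) = 1 := by
  constructor
  · -- Schur stability
    apply schur_of_pow_tendsto
    intro z0
    have hzero : SigmaSol A B Cm Dm E F (fun _ => 0) (fun _ => 0) (fun _ => 0) (fun _ => 0) := by
      intro t
      simp [Matrix.mulVec_zero]
    have hobs : ObsSol Auio Bu By Du Dy (fun t => (Auio ^ t).mulVec z0) (fun _ => 0)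
        (fun _ => 0) (fun t => (Auio ^ t).mulVec z0) := by
      intro t
      constructor
      · simp only [Matrix.mulVec_zero, add_zero]
        rw [pow_succ', ← Matrix.mulVec_mulVec]
      · simp [Matrix.mulVec_zero]
    have htend := huio.2 (fun _ => 0) (fun _ => 0) (fun _ => 0) (fun _ => 0)
      (fun t => (Auio ^ t).mulVec z0) (fun t => (Auio ^ t).mulVec z0) hzero hobs
    have := htend.neg
    simpa using this
  · intro q Ψ hker
    -- extended solution
    obtain ⟨u, hu_def⟩ : ∃ u' : ℕ → Fin m → ℝ,
        u' = fun t => if t + 1 ≤ T then ud t else 0 := ⟨_, rfl⟩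
    obtain ⟨d, hd_def⟩ : ∃ d' : ℕ → Fin r → ℝ,
        d' = fun t => if t + 1 ≤ T then dd t else 0 := ⟨_, rfl⟩
    obtain ⟨x, hx_def⟩ : ∃ x' : ℕ → Fin n → ℝ, x' = fun t => Nat.rec (xd 0)
        (fun s xs => if s + 2 ≤ T then xd (s + 1)
          else A.mulVec xs + B.mulVec (u s) + E.mulVec (d s)) t := ⟨_, rfl⟩
    obtain ⟨y, hy_def⟩ : ∃ y' : ℕ → Fin p → ℝ, y' = fun t =>
        Cm.mulVec (x t) + Dm.mulVec (u t) + F.mulVec (d t) := ⟨_, rfl⟩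
    have hxs : ∀ t, x (t + 1) = if t + 2 ≤ T then xd (t + 1)
        else A.mulVec (x t) + B.mulVec (u t) + E.mulVec (d t) := by
      intro t
      conv_lhs => rw [hx_def]
      conv_rhs => rw [hx_def]
    have hx : ∀ t, t + 1 ≤ T → x t = xd t := by
      intro t ht
      induction t with
      | zero => rw [hx_def]; rfl
      | succ s ih => rw [hxs s, if_pos ht]
    have hu : ∀ t, t + 1 ≤ T → u t = ud t := by
      intro t ht; rw [hu_def]; exact if_pos ht
    have hd : ∀ t, t + 1 ≤ T → d t = dd t := by
      intro t ht; rw [hd_def]; exact if_pos ht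
    have hy : ∀ t, t + 1 ≤ T → y t = yd t := by
      intro t ht
      rw [hgen2 t ht, ← hx t ht, ← hu t ht, ← hd t ht, hy_def]
    have hsol : SigmaSol A B Cm Dm E F x u y d := by
      intro t
      refine ⟨?_, by rw [hy_def]⟩
      rw [hxs t]
      split_ifs with h
      · rw [hgen1 t h, hx t (by omega), hu t (by omega), hd t (by omega)]
      · rfl
    obtain ⟨z, hz⟩ := huio.1 x u y d hsol
    -- the annihilating matrix
    obtain ⟨Θ, hΘ_def⟩ : ∃ Θ' : Matrix (Fin n) (RowIdx n m p) ℝ,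
        Θ' = fromCols (fromCols (-Auio) 1)
          (fromCols (fromCols (Auio * Du - Bu) (-Du))
            (fromCols (Auio * Dy - By) (-Dy))) := ⟨_, rfl⟩
    have hstackElim : ∀ (x' : ℕ → Fin n → ℝ) (u' : ℕ → Fin m → ℝ) (y' : ℕ → Fin p → ℝ) t,
        stackVec x' u' y' t = Sum.elim (Sum.elim (x' t) (x' (t + 1)))
          (Sum.elim (Sum.elim (u' t) (u' (t + 1))) (Sum.elim (y' t) (y' (t + 1)))) := by
      intro x' u' y' t
      funext k
      rcases k with (a | a) | ((a | a) | (a | a)) <;> rfl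
    have hstack : ∀ t, Θ.mulVec (stackVec x u y t) = 0 := by
      intro t
      rw [hstackElim]
      rw [hΘ_def]
      simp only [fromCols_mulVec_sumElim]
      rw [(hz t).2, (hz (t + 1)).2, (hz t).1]
      simp only [Matrix.neg_mulVec, Matrix.sub_mulVec, Matrix.mulVec_add,
        Matrix.one_mulVec, ← Matrix.mulVec_mulVec]
      abel
    have hcol : ∀ j : Fin (T - 1), (fun k => PhiD T xd ud yd k j) = stackVec x u y j.1 := by
      intro j
      have hj2 : (j : ℕ) + 2 ≤ T := by omega
      have h1 : x j.1 = xd j.1 := hx _ (by omega)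
      have h2 : x (j.1 + 1) = xd (j.1 + 1) := hx _ (by omega)
      have h3 : u j.1 = ud j.1 := hu _ (by omega)
      have h4 : u (j.1 + 1) = ud (j.1 + 1) := hu _ (by omega)
      have h5 : y j.1 = yd j.1 := hy _ (by omega)
      have h6 : y (j.1 + 1) = yd (j.1 + 1) := hy _ (by omega)
      funext k
      rcases k with (a | a) | ((a | a) | (a | a)) <;>
        simp [PhiD, stackVec, h1, h2, h3, h4, h5, h6]
    have hΘΦ : Θ * PhiD T xd ud yd = 0 := by
      ext i j
      have hmm : (Θ * PhiD T xd ud yd) i j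
          = (Θ.mulVec (fun k => PhiD T xd ud yd k j)) i := by
        simp [Matrix.mul_apply, Matrix.mulVec, dotProduct]
      rw [hmm, hcol j, hstack]
      rfl
    have hkill : ∀ v, Ψ.mulVec v = 0 → Θ.mulVec v = 0 := by
      intro v hv
      obtain ⟨c, rfl⟩ := (hker v).mp hv
      rw [Matrix.mulVec_mulVec, hΘΦ, Matrix.zero_mulVec]
    have hle : LinearMap.ker (Matrix.mulVecLin Ψ) ≤ LinearMap.ker (Matrix.mulVecLin Θ) := by
      intro v hv
      rw [LinearMap.mem_ker, Matrix.mulVecLin_apply] at hv ⊢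
      exact hkill v hv
    obtain ⟨Ω', hΩ'⟩ := factor_through (Matrix.mulVecLin Ψ) (Matrix.mulVecLin Θ) hle
    have key : ∀ k0 : RowIdx n m p,
        (LinearMap.toMatrix' Ω').mulVec (fun s => Ψ s k0) = fun i => Θ i k0 := by
      intro k0
      have h1 := hΩ' (Pi.single k0 1)
      rw [Matrix.mulVecLin_apply, Matrix.mulVecLin_apply, Matrix.mulVec_single,
        Matrix.mulVec_single] at h1
      simp only [MulOpposite.op_one, one_smul, Matrix.col_apply'] at h1
      have h2 : (LinearMap.toMatrix' Ω').mulVec (fun s => Ψ s k0)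
          = Ω' (fun s => Ψ s k0) := by
        rw [← Matrix.toLin'_apply, Matrix.toLin'_toMatrix']
      rw [h2, h1]
    refine ⟨LinearMap.toMatrix' Ω', ?_, ?_⟩ <;> ext i j
    · have hk := congrFun (key (Sum.inl (Sum.inl j))) i
      simp only [Matrix.mulVec, dotProduct] at hk
      simp only [Matrix.mul_apply, Matrix.of_apply]
      rw [hk, hΘ_def]
      simp [fromCols_apply_inl]
    · have hk := congrFun (key (Sum.inl (Sum.inr j))) i
      simp only [Matrix.mulVec, dotProduct] at hk
      simp only [Matrix.mul_apply, Matrix.of_apply]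
      rw [hk, hΘ_def]
      simp [fromCols_apply_inl]
end
end

section
/- (Theorem 3, 'if' direction, constructive form) Suppose the historical data are generated by Σ and satisfy the Assumption. Let Ψ = [V_p V_f W_p W_f R_p R_f] ∈ ℝ^{q×2(n+m+p)} be a matrix whose kernel equals the column space of Φ_d, and suppose there exist Ω ∈ ℝ^{n×q} and a Schur stable matrix A* ∈ ℝ^{n×n} with Ω V_p = −A* and Ω V_f = I_n. Define S₃ = −Ω W_p, S₄ = −Ω W_f, S₅ = −Ω R_p, S₆ = −Ω R_f. Then the observer candidate Σ̂ with matrices A_UIO = A*, Du = S₄, Bu = S₃ + A* S₄, Dy = S₆, By = S₅ + A* S₆ is a UIO for Σ. -/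
open Matrix Filter

noncomputable section

attribute [local instance] Matrix.linftyOpNormedRing Matrix.linftyOpNormedAlgebra

open scoped ENNReal NNReal in
lemma norm_pow_tendsto_zero {n : ℕ} (hn : 0 < n) (M : Matrix (Fin n) (Fin n) ℂ)
    (h : ∀ μ ∈ spectrum ℂ M, ‖μ‖ < 1) :
    Tendsto (fun t : ℕ => ‖M ^ t‖) atTop (nhds 0) := by
  haveI : Nonempty (Fin n) := ⟨⟨0, hn⟩⟩
  haveI : Nontrivial (Matrix (Fin n) (Fin n) ℂ) := by
    unfold Matrix; infer_instance
  have hρ : spectralRadius ℂ M < (1 : ℝ≥0) := by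
    apply spectrum.spectralRadius_lt_of_forall_lt
    intro z hz
    simpa [← norm_toNNReal] using h z hz
  obtain ⟨c, hc1, hc2⟩ := ENNReal.lt_iff_exists_nnreal_btwn.mp (by simpa using hρ)
  have hc2' : (c : ℝ) < 1 := by exact_mod_cast hc2
  have hG := spectrum.pow_nnnorm_pow_one_div_tendsto_nhds_spectralRadius M
  have hev : ∀ᶠ t : ℕ in atTop, (‖M ^ t‖₊ : ℝ≥0∞) ^ (1 / (t : ℝ)) < c :=
    hG.eventually (gt_mem_nhds hc1)
  have hbd : ∀ᶠ t : ℕ in atTop, ‖M ^ t‖ ≤ (c : ℝ) ^ t := by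
    filter_upwards [hev, eventually_ge_atTop 1] with t ht ht1
    have htpos : (0 : ℝ) < (t : ℝ) := by exact_mod_cast ht1
    have := ENNReal.rpow_lt_rpow ht htpos
    rw [← ENNReal.rpow_mul, one_div, inv_mul_cancel₀ htpos.ne', ENNReal.rpow_one,
      ENNReal.rpow_natCast] at this
    rw [← ENNReal.coe_pow, ENNReal.coe_lt_coe] at this
    have := this.le
    calc ‖M ^ t‖ = ((‖M ^ t‖₊ : ℝ≥0) : ℝ) := (coe_nnnorm _).symm
    _ ≤ ((c ^ t : ℝ≥0) : ℝ) := by exact_mod_cast this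
    _ = (c : ℝ) ^ t := by push_cast; ring
  refine squeeze_zero' (Eventually.of_forall fun t => norm_nonneg _) hbd ?_
  exact tendsto_pow_atTop_nhds_zero_of_lt_one c.coe_nonneg hc2'

lemma schur_mulVec_tendsto {n : ℕ} (hn : 0 < n) (Astar : Matrix (Fin n) (Fin n) ℝ)
    (hA : SchurStable Astar) (v : Fin n → ℝ) :
    Tendsto (fun t : ℕ => (Astar ^ t).mulVec v) atTop (nhds 0) := by
  set M := Astar.map (algebraMap ℝ ℂ) with hM
  have hMt : ∀ t : ℕ, M ^ t = (Astar ^ t).map (algebraMap ℝ ℂ) := fun t => by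
    simpa [RingHom.mapMatrix_apply, hM] using (map_pow ((algebraMap ℝ ℂ).mapMatrix) Astar t).symm
  set w : Fin n → ℂ := fun j => (v j : ℂ) with hw
  have hentry : ∀ (t : ℕ) (i : Fin n), ((M ^ t).mulVec w) i = (((Astar ^ t).mulVec v) i : ℂ) := by
    intro t i
    rw [hMt]
    simp [Matrix.mulVec, dotProduct, Matrix.map_apply, hw]
  rw [tendsto_pi_nhds]
  intro i
  have key : ∀ t : ℕ, ‖((Astar ^ t).mulVec v) i‖ ≤ ‖M ^ t‖ * ‖w‖ := by
    intro t
    have h1 : ‖((Astar ^ t).mulVec v) i‖ = ‖((M ^ t).mulVec w) i‖ := by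
      rw [hentry t i, Complex.norm_real]
    rw [h1]
    calc ‖((M ^ t).mulVec w) i‖ ≤ ‖(M ^ t).mulVec w‖ := norm_le_pi_norm _ i
    _ ≤ ‖M ^ t‖ * ‖w‖ := Matrix.linfty_opNorm_mulVec _ _
  have hlim : Tendsto (fun t : ℕ => ‖M ^ t‖ * ‖w‖) atTop (nhds 0) := by
    simpa using (norm_pow_tendsto_zero hn M hA).mul_const ‖w‖
  simpa using squeeze_zero_norm key hlim

lemma exists_mulVec_eq {ι κ : Type*} [Fintype ι] [Fintype κ] (H : Matrix ι κ ℝ)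
    (h : H.rank = Fintype.card ι) (w : ι → ℝ) : ∃ c, H.mulVec c = w := by
  have htop : LinearMap.range H.mulVecLin = ⊤ := by
    apply Submodule.eq_top_of_finrank_eq
    rw [Module.finrank_fintype_fun_eq_card]
    exact h
  obtain ⟨c, hc⟩ := LinearMap.range_eq_top.mp htop w
  exact ⟨c, by simpa [Matrix.mulVecLin_apply] using hc⟩

lemma sum_mulVec_comm {ι κ J : Type*} [Fintype ι] [Fintype κ] [Fintype J]
    (M : Matrix ι κ ℝ) (f : J → κ → ℝ) (c : J → ℝ) (i : ι) :
    ∑ j, (M.mulVec (f j)) i * c j = (M.mulVec (fun k => ∑ j, f j k * c j)) i := by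
  simp only [Matrix.mulVec, dotProduct, Finset.sum_mul, Finset.mul_sum]
  rw [Finset.sum_comm]
  exact Finset.sum_congr rfl fun k _ => Finset.sum_congr rfl fun j _ => by ring

theorem theorem3_if_constructive {n m p r : ℕ} (hn : 0 < n) (hm : 0 < m) (hp : 0 < p) (hr : 0 < r)
    (A : Matrix (Fin n) (Fin n) ℝ) (B : Matrix (Fin n) (Fin m) ℝ)
    (Cm : Matrix (Fin p) (Fin n) ℝ) (Dm : Matrix (Fin p) (Fin m) ℝ)
    (E : Matrix (Fin n) (Fin r) ℝ) (F : Matrix (Fin p) (Fin r) ℝ)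
    (hEF : (Matrix.fromRows E F).rank = r)
    (T : ℕ) (hT : 2 ≤ T)
    (xd : ℕ → Fin n → ℝ) (ud : ℕ → Fin m → ℝ) (yd : ℕ → Fin p → ℝ)
    (dd : ℕ → Fin r → ℝ)
    (hgen1 : ∀ t : ℕ, t + 2 ≤ T →
      xd (t + 1) = A.mulVec (xd t) + B.mulVec (ud t) + E.mulVec (dd t))
    (hgen2 : ∀ t : ℕ, t + 1 ≤ T →
      yd t = Cm.mulVec (xd t) + Dm.mulVec (ud t) + F.mulVec (dd t))
    (hassump : (HistMat T xd ud dd).rank = n + ((m + m) + (r + r)))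
    (q : ℕ) (Ψ : Matrix (Fin q) (RowIdx n m p) ℝ)
    (hker : ∀ v : RowIdx n m p → ℝ, Ψ.mulVec v = 0 ↔
      ∃ c : Fin (T - 1) → ℝ, v = (PhiD T xd ud yd).mulVec c)
    (Ω : Matrix (Fin n) (Fin q) ℝ) (Astar : Matrix (Fin n) (Fin n) ℝ)
    (hA : SchurStable Astar)
    (hVp : Ω * Matrix.of (fun i j => Ψ i (Sum.inl (Sum.inl j))) = -Astar)
    (hVf : Ω * Matrix.of (fun i j => Ψ i (Sum.inl (Sum.inr j))) = 1)
    (S3 : Matrix (Fin n) (Fin m) ℝ)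
    (hS3 : S3 = -(Ω * Matrix.of (fun i j => Ψ i (Sum.inr (Sum.inl (Sum.inl j))))))
    (S4 : Matrix (Fin n) (Fin m) ℝ)
    (hS4 : S4 = -(Ω * Matrix.of (fun i j => Ψ i (Sum.inr (Sum.inl (Sum.inr j))))))
    (S5 : Matrix (Fin n) (Fin p) ℝ)
    (hS5 : S5 = -(Ω * Matrix.of (fun i j => Ψ i (Sum.inr (Sum.inr (Sum.inl j))))))
    (S6 : Matrix (Fin n) (Fin p) ℝ)
    (hS6 : S6 = -(Ω * Matrix.of (fun i j => Ψ i (Sum.inr (Sum.inr (Sum.inr j)))))) :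
    IsUIO A B Cm Dm E F Astar (S3 + Astar * S4) (S5 + Astar * S6) S4 S6 := by
  -- abbreviations for the six blocks of Ψ
  set Vp := Matrix.of (fun i j => Ψ i (Sum.inl (Sum.inl j))) with hVpdef
  set Vf := Matrix.of (fun i j => Ψ i (Sum.inl (Sum.inr j))) with hVfdef
  have hW3 : Ω * Matrix.of (fun i j => Ψ i (Sum.inr (Sum.inl (Sum.inl j)))) = -S3 := by
    rw [hS3, neg_neg]
  have hW4 : Ω * Matrix.of (fun i j => Ψ i (Sum.inr (Sum.inl (Sum.inr j)))) = -S4 := by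
    rw [hS4, neg_neg]
  have hW5 : Ω * Matrix.of (fun i j => Ψ i (Sum.inr (Sum.inr (Sum.inl j)))) = -S5 := by
    rw [hS5, neg_neg]
  have hW6 : Ω * Matrix.of (fun i j => Ψ i (Sum.inr (Sum.inr (Sum.inr j)))) = -S6 := by
    rw [hS6, neg_neg]
  -- the key consequence: the closed-loop recursion satisfied by every solution of Σ
  have hkey : ∀ (x : ℕ → Fin n → ℝ) (u : ℕ → Fin m → ℝ) (y : ℕ → Fin p → ℝ)
      (d : ℕ → Fin r → ℝ), SigmaSol A B Cm Dm E F x u y d → ∀ t : ℕ,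
      x (t + 1) = Astar.mulVec (x t) + S3.mulVec (u t) + S4.mulVec (u (t + 1))
        + S5.mulVec (y t) + S6.mulVec (y (t + 1)) := by
    intro x u y d hsol t
    -- the stacked "input data" vector at time t
    set w : (Fin n ⊕ ((Fin m ⊕ Fin m) ⊕ (Fin r ⊕ Fin r))) → ℝ := fun i =>
      match i with
      | Sum.inl a => x t a
      | Sum.inr (Sum.inl (Sum.inl a)) => u t a
      | Sum.inr (Sum.inl (Sum.inr a)) => u (t + 1) a
      | Sum.inr (Sum.inr (Sum.inl a)) => d t a
      | Sum.inr (Sum.inr (Sum.inr a)) => d (t + 1) a with hwdef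
    obtain ⟨c, hc⟩ := exists_mulVec_eq (HistMat T xd ud dd)
      (by rw [hassump]; simp) w
    have hxp : (fun k => ∑ j : Fin (T-1), xd j.1 k * c j) = x t := by
      funext k
      simpa [HistMat, Matrix.mulVec, dotProduct, hwdef] using congrFun hc (Sum.inl k)
    have hup : (fun k => ∑ j : Fin (T-1), ud j.1 k * c j) = u t := by
      funext k
      simpa [HistMat, Matrix.mulVec, dotProduct, hwdef] using
        congrFun hc (Sum.inr (Sum.inl (Sum.inl k)))
    have huf : (fun k => ∑ j : Fin (T-1), ud (j.1 + 1) k * c j) = u (t + 1) := by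
      funext k
      simpa [HistMat, Matrix.mulVec, dotProduct, hwdef] using
        congrFun hc (Sum.inr (Sum.inl (Sum.inr k)))
    have hdp : (fun k => ∑ j : Fin (T-1), dd j.1 k * c j) = d t := by
      funext k
      simpa [HistMat, Matrix.mulVec, dotProduct, hwdef] using
        congrFun hc (Sum.inr (Sum.inr (Sum.inl k)))
    have hdf : (fun k => ∑ j : Fin (T-1), dd (j.1 + 1) k * c j) = d (t + 1) := by
      funext k
      simpa [HistMat, Matrix.mulVec, dotProduct, hwdef] using
        congrFun hc (Sum.inr (Sum.inr (Sum.inr k)))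
    have hxf : (fun k => ∑ j : Fin (T-1), xd (j.1 + 1) k * c j) = x (t + 1) := by
      funext k
      calc ∑ j : Fin (T-1), xd (j.1 + 1) k * c j
          = ∑ j : Fin (T-1), ((A.mulVec (xd j.1)) k * c j + (B.mulVec (ud j.1)) k * c j
              + (E.mulVec (dd j.1)) k * c j) := by
            refine Finset.sum_congr rfl fun j _ => ?_
            have h2 : j.1 + 2 ≤ T := by omega
            rw [hgen1 j.1 h2]
            simp [Pi.add_apply]; ring
        _ = (∑ j : Fin (T-1), (A.mulVec (xd j.1)) k * c j)
            + (∑ j : Fin (T-1), (B.mulVec (ud j.1)) k * c j)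
            + (∑ j : Fin (T-1), (E.mulVec (dd j.1)) k * c j) := by
            rw [Finset.sum_add_distrib, Finset.sum_add_distrib]
        _ = (A.mulVec (x t)) k + (B.mulVec (u t)) k + (E.mulVec (d t)) k := by
            rw [sum_mulVec_comm, sum_mulVec_comm, sum_mulVec_comm, hxp, hup, hdp]
        _ = x (t + 1) k := by rw [(hsol t).1]; simp
    have hyp : (fun k => ∑ j : Fin (T-1), yd j.1 k * c j) = y t := by
      funext k
      calc ∑ j : Fin (T-1), yd j.1 k * c j
          = ∑ j : Fin (T-1), ((Cm.mulVec (xd j.1)) k * c j + (Dm.mulVec (ud j.1)) k * c j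
              + (F.mulVec (dd j.1)) k * c j) := by
            refine Finset.sum_congr rfl fun j _ => ?_
            have h2 : j.1 + 1 ≤ T := by omega
            rw [hgen2 j.1 h2]
            simp [Pi.add_apply]; ring
        _ = (∑ j : Fin (T-1), (Cm.mulVec (xd j.1)) k * c j)
            + (∑ j : Fin (T-1), (Dm.mulVec (ud j.1)) k * c j)
            + (∑ j : Fin (T-1), (F.mulVec (dd j.1)) k * c j) := by
            rw [Finset.sum_add_distrib, Finset.sum_add_distrib]
        _ = (Cm.mulVec (x t)) k + (Dm.mulVec (u t)) k + (F.mulVec (d t)) k := by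
            rw [sum_mulVec_comm, sum_mulVec_comm, sum_mulVec_comm, hxp, hup, hdp]
        _ = y t k := by rw [(hsol t).2]; simp
    have hyf : (fun k => ∑ j : Fin (T-1), yd (j.1 + 1) k * c j) = y (t + 1) := by
      funext k
      calc ∑ j : Fin (T-1), yd (j.1 + 1) k * c j
          = ∑ j : Fin (T-1), ((Cm.mulVec (xd (j.1 + 1))) k * c j
              + (Dm.mulVec (ud (j.1 + 1))) k * c j
              + (F.mulVec (dd (j.1 + 1))) k * c j) := by
            refine Finset.sum_congr rfl fun j _ => ?_
            have h2 : j.1 + 1 + 1 ≤ T := by omega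
            rw [hgen2 (j.1 + 1) h2]
            simp [Pi.add_apply]; ring
        _ = (∑ j : Fin (T-1), (Cm.mulVec (xd (j.1 + 1))) k * c j)
            + (∑ j : Fin (T-1), (Dm.mulVec (ud (j.1 + 1))) k * c j)
            + (∑ j : Fin (T-1), (F.mulVec (dd (j.1 + 1))) k * c j) := by
            rw [Finset.sum_add_distrib, Finset.sum_add_distrib]
        _ = (Cm.mulVec (x (t + 1))) k + (Dm.mulVec (u (t + 1))) k
            + (F.mulVec (d (t + 1))) k := by
            rw [sum_mulVec_comm, sum_mulVec_comm, sum_mulVec_comm, hxf, huf, hdf]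
        _ = y (t + 1) k := by rw [(hsol (t + 1)).2]; simp
    have hstack : stackVec x u y t = (PhiD T xd ud yd).mulVec c := by
      funext i
      rcases i with (a | a) | ((a | a) | (a | a))
      · simpa [PhiD, stackVec, Matrix.mulVec, dotProduct] using (congrFun hxp a).symm
      · simpa [PhiD, stackVec, Matrix.mulVec, dotProduct] using (congrFun hxf a).symm
      · simpa [PhiD, stackVec, Matrix.mulVec, dotProduct] using (congrFun hup a).symm
      · simpa [PhiD, stackVec, Matrix.mulVec, dotProduct] using (congrFun huf a).symm
      · simpa [PhiD, stackVec, Matrix.mulVec, dotProduct] using (congrFun hyp a).symm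
      · simpa [PhiD, stackVec, Matrix.mulVec, dotProduct] using (congrFun hyf a).symm
    have hΨ0 : Ψ.mulVec (stackVec x u y t) = 0 := (hker _).mpr ⟨c, hstack⟩
    have h0 : (Ω * Ψ).mulVec (stackVec x u y t) = 0 := by
      rw [← Matrix.mulVec_mulVec, hΨ0, Matrix.mulVec_zero]
    have hdec : (Ω * Ψ).mulVec (stackVec x u y t) =
        (Ω * Vp).mulVec (x t) + (Ω * Vf).mulVec (x (t + 1))
        + (Ω * Matrix.of (fun i j => Ψ i (Sum.inr (Sum.inl (Sum.inl j))))).mulVec (u t)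
        + (Ω * Matrix.of (fun i j => Ψ i (Sum.inr (Sum.inl (Sum.inr j))))).mulVec (u (t + 1))
        + (Ω * Matrix.of (fun i j => Ψ i (Sum.inr (Sum.inr (Sum.inl j))))).mulVec (y t)
        + (Ω * Matrix.of (fun i j => Ψ i (Sum.inr (Sum.inr (Sum.inr j))))).mulVec (y (t + 1)) := by
      funext i
      simp [Matrix.mulVec, dotProduct, Matrix.mul_apply, Fintype.sum_sum_type,
        stackVec, hVpdef, hVfdef]
      ring
    rw [hdec, hVp, hVf, hW3, hW4, hW5, hW6] at h0
    funext i
    have h0i := congrFun h0 i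
    simp [Matrix.neg_mulVec, Matrix.one_mulVec, Pi.add_apply, Pi.neg_apply,
      Pi.zero_apply] at h0i
    simp only [Pi.add_apply]
    linarith
  constructor
  · -- acceptor
    intro x u y d hsol
    refine ⟨fun t => x t - S4.mulVec (u t) - S6.mulVec (y t), fun t => ?_⟩
    constructor
    · show x (t + 1) - S4.mulVec (u (t + 1)) - S6.mulVec (y (t + 1))
        = Astar.mulVec (x t - S4.mulVec (u t) - S6.mulVec (y t))
          + (S3 + Astar * S4).mulVec (u t) + (S5 + Astar * S6).mulVec (y t)
      rw [hkey x u y d hsol t]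
      simp only [Matrix.add_mulVec, Matrix.mulVec_sub, ← Matrix.mulVec_mulVec]
      abel
    · show x t = (x t - S4.mulVec (u t) - S6.mulVec (y t)) + S4.mulVec (u t) + S6.mulVec (y t)
      abel
  · -- error convergence
    intro x u y d xh z hsol hobs
    have herr : ∀ t : ℕ, x t - xh t = (Astar ^ t).mulVec (x 0 - xh 0) := by
      intro t
      induction t with
      | zero => simp
      | succ t ih =>
        have hstep : x (t + 1) - xh (t + 1) = Astar.mulVec (x t - xh t) := by
          rw [(hobs (t + 1)).2, (hobs t).1, hkey x u y d hsol t, (hobs t).2]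
          simp only [Matrix.add_mulVec, Matrix.mulVec_sub, Matrix.mulVec_add,
            ← Matrix.mulVec_mulVec]
          abel
        rw [hstep, ih, Matrix.mulVec_mulVec, ← pow_succ']
    have := schur_mulVec_tendsto hn Astar hA (x 0 - xh 0)
    refine Tendsto.congr (fun t => (herr t).symm) this
end
end

section
/- (Error dynamics, from the proof of Proposition 2) Suppose the observer candidate Σ̂ is an acceptor for the system Σ. Then for every solution (x, u, y, d) of Σ and every solution (x̂, u, y, z) of Σ̂ with the same u and y, the error e(t) = x(t) − x̂(t) satisfies e(t+1) = A_UIO e(t) for all t ∈ ℕ. -/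
open Matrix Filter

noncomputable section

theorem error_dynamics {n m p r : ℕ} (hn : 0 < n) (hm : 0 < m) (hp : 0 < p) (hr : 0 < r)
    (A : Matrix (Fin n) (Fin n) ℝ) (B : Matrix (Fin n) (Fin m) ℝ)
    (Cm : Matrix (Fin p) (Fin n) ℝ) (Dm : Matrix (Fin p) (Fin m) ℝ)
    (E : Matrix (Fin n) (Fin r) ℝ) (F : Matrix (Fin p) (Fin r) ℝ)
    (hEF : (Matrix.fromRows E F).rank = r)
    (Auio : Matrix (Fin n) (Fin n) ℝ) (Bu : Matrix (Fin n) (Fin m) ℝ)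
    (By : Matrix (Fin n) (Fin p) ℝ) (Du : Matrix (Fin n) (Fin m) ℝ)
    (Dy : Matrix (Fin n) (Fin p) ℝ)
    (hacc : IsAcceptor A B Cm Dm E F Auio Bu By Du Dy)
    (x : ℕ → Fin n → ℝ) (u : ℕ → Fin m → ℝ) (y : ℕ → Fin p → ℝ)
    (d : ℕ → Fin r → ℝ) (xh : ℕ → Fin n → ℝ) (z : ℕ → Fin n → ℝ)
    (hx : SigmaSol A B Cm Dm E F x u y d)
    (hxh : ObsSol Auio Bu By Du Dy xh u y z) :
    ∀ t : ℕ, x (t + 1) - xh (t + 1) = Auio.mulVec (x t - xh t) := by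
  obtain ⟨z', hz'⟩ := hacc x u y d hx
  intro t
  have hx1 := (hz' t).2
  have hx2 := (hz' (t + 1)).2
  have hz1 := (hz' t).1
  have hxh1 := (hxh t).2
  have hxh2 := (hxh (t + 1)).2
  have hzz := (hxh t).1
  have h1 : x t - xh t = z' t - z t := by
    rw [hx1, hxh1]; abel
  have h2 : x (t + 1) - xh (t + 1) = z' (t + 1) - z (t + 1) := by
    rw [hx2, hxh2]; abel
  rw [h2, h1, hz1, hzz, Matrix.mulVec_sub]
  abel
end
end

section
/- (Degree bound on T(z), from the proof of Proposition 1) Let G(z) = [[zI_n − A, −B, 0], [−C, −D, I_p]] ∈ ℝ[z]^{(n+p)×(n+m+p)}. If T(z) ∈ ℝ[z]^{n×(n+p−r)} is a polynomial matrix such that every entry of the product T(z) · [M_E M_F] · G(z) has degree at most 1, then every entry of T(z) has degree at most 1, i.e., T(z) = T₀ + z T₁ for some real matrices T₀, T₁ ∈ ℝ^{n×(n+p−r)}. -/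
open Matrix Filter

noncomputable section

lemma vecMul_zero_of_rank_rows {q : ℕ} {α : Type*} [Fintype α] [DecidableEq α]
    (M : Matrix (Fin q) α ℝ) (h : M.rank = q) {v : Fin q → ℝ}
    (hv : Matrix.vecMul v M = 0) : v = 0 := by
  have hli : LinearIndependent ℝ (fun i => M i) := by
    rw [linearIndependent_iff_card_eq_finrank_span]
    rw [Matrix.rank_eq_finrank_span_row] at h
    simp [Set.finrank, ← h]
    rfl
  have hinj := Matrix.vecMul_injective_iff.mpr hli
  have h0 : Matrix.vecMul v M = Matrix.vecMul 0 M := by simp [hv]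
  exact hinj h0

lemma coeff_mul_mapC {n q : ℕ} {β : Type*} [Fintype β]
    (Tz : Matrix (Fin n) (Fin q) (Polynomial ℝ)) (W : Matrix (Fin q) β ℝ)
    (i : Fin n) (j : β) (k : ℕ) :
    ((Tz * W.map (Polynomial.C : ℝ →+* Polynomial ℝ)) i j).coeff k
      = ∑ l, (Tz i l).coeff k * W l j := by
  rw [Matrix.mul_apply, Polynomial.finset_sum_coeff]
  simp [Matrix.map_apply, Polynomial.coeff_mul_C]

theorem degree_bound_T {n m p r : ℕ} (hn : 0 < n) (hm : 0 < m) (hp : 0 < p) (hr : 0 < r)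
    (A : Matrix (Fin n) (Fin n) ℝ) (B : Matrix (Fin n) (Fin m) ℝ)
    (Cm : Matrix (Fin p) (Fin n) ℝ) (Dm : Matrix (Fin p) (Fin m) ℝ)
    (E : Matrix (Fin n) (Fin r) ℝ) (F : Matrix (Fin p) (Fin r) ℝ)
    (hEF : (Matrix.fromRows E F).rank = r)
    (ME : Matrix (Fin (n + p - r)) (Fin n) ℝ) (MF : Matrix (Fin (n + p - r)) (Fin p) ℝ)
    (hMrank : (Matrix.fromCols ME MF).rank = n + p - r)
    (hMker : ∀ v : Fin n ⊕ Fin p → ℝ,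
      (Matrix.fromCols ME MF).mulVec v = 0 ↔
        ∃ c : Fin r → ℝ, v = (Matrix.fromRows E F).mulVec c)
    (Tz : Matrix (Fin n) (Fin (n + p - r)) (Polynomial ℝ))
    (hdeg : ∀ (i : Fin n) (j : Fin n ⊕ (Fin m ⊕ Fin p)),
      ((Tz * (Matrix.fromCols ME MF).map (Polynomial.C : ℝ →+* Polynomial ℝ) *
        Matrix.fromBlocks
          ((Polynomial.X : Polynomial ℝ) • (1 : Matrix (Fin n) (Fin n) (Polynomial ℝ)) -
            A.map (Polynomial.C : ℝ →+* Polynomial ℝ))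
          (Matrix.fromCols (-(B.map (Polynomial.C : ℝ →+* Polynomial ℝ)))
            (0 : Matrix (Fin n) (Fin p) (Polynomial ℝ)))
          (-(Cm.map (Polynomial.C : ℝ →+* Polynomial ℝ)))
          (Matrix.fromCols (-(Dm.map (Polynomial.C : ℝ →+* Polynomial ℝ)))
            (1 : Matrix (Fin p) (Fin p) (Polynomial ℝ)))) i j).degree ≤ 1) :
    (∀ (i : Fin n) (j : Fin (n + p - r)), (Tz i j).degree ≤ 1) ∧
    ∃ (T0 T1 : Matrix (Fin n) (Fin (n + p - r)) ℝ),
      Tz = T0.map (Polynomial.C : ℝ →+* Polynomial ℝ) +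
        (Polynomial.X : Polynomial ℝ) • T1.map (Polynomial.C : ℝ →+* Polynomial ℝ) := by
  
  classical
  set MEc := ME.map (Polynomial.C : ℝ →+* Polynomial ℝ) with hMEc
  set MFc := MF.map (Polynomial.C : ℝ →+* Polynomial ℝ) with hMFc
  have hmapcol : (Matrix.fromCols ME MF).map (Polynomial.C : ℝ →+* Polynomial ℝ)
      = Matrix.fromCols MEc MFc := by
    ext i j; cases j <;> rfl
  have key : (Tz * (Matrix.fromCols ME MF).map (Polynomial.C : ℝ →+* Polynomial ℝ) *
        Matrix.fromBlocks
          ((Polynomial.X : Polynomial ℝ) • (1 : Matrix (Fin n) (Fin n) (Polynomial ℝ)) -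
            A.map (Polynomial.C : ℝ →+* Polynomial ℝ))
          (Matrix.fromCols (-(B.map (Polynomial.C : ℝ →+* Polynomial ℝ)))
            (0 : Matrix (Fin n) (Fin p) (Polynomial ℝ)))
          (-(Cm.map (Polynomial.C : ℝ →+* Polynomial ℝ)))
          (Matrix.fromCols (-(Dm.map (Polynomial.C : ℝ →+* Polynomial ℝ)))
            (1 : Matrix (Fin p) (Fin p) (Polynomial ℝ)))) =
      Matrix.fromCols
        ((Polynomial.X : Polynomial ℝ) • (Tz * MEc) -
          Tz * (MEc * A.map (Polynomial.C : ℝ →+* Polynomial ℝ) +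
                MFc * Cm.map (Polynomial.C : ℝ →+* Polynomial ℝ)))
        (Matrix.fromCols
          (-(Tz * (MEc * B.map (Polynomial.C : ℝ →+* Polynomial ℝ) +
                MFc * Dm.map (Polynomial.C : ℝ →+* Polynomial ℝ))))
          (Tz * MFc)) := by
    rw [hmapcol, Matrix.mul_assoc, Matrix.fromCols_mul_fromBlocks]
    simp only [Matrix.mul_sub, Matrix.mul_add, Matrix.mul_smul,
      Matrix.mul_one, Matrix.mul_neg, Matrix.mul_zero, Matrix.smul_mul, Matrix.mul_assoc,
      Matrix.mul_fromCols]
    refine Matrix.ext fun i j => ?_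
    rcases j with j | j | j <;>
      simp only [Matrix.fromCols_apply_inl, Matrix.fromCols_apply_inr, Matrix.add_apply,
        Matrix.sub_apply, Matrix.smul_apply, Matrix.neg_apply, Matrix.zero_apply] <;>
      abel
  rw [key] at hdeg
  have hconstA : MEc * A.map (Polynomial.C : ℝ →+* Polynomial ℝ) +
      MFc * Cm.map (Polynomial.C : ℝ →+* Polynomial ℝ)
      = (ME * A + MF * Cm).map (Polynomial.C : ℝ →+* Polynomial ℝ) := by
    ext l j
    simp [hMEc, hMFc, Matrix.mul_apply, Matrix.map_apply, Matrix.add_apply, map_sum]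
  have h3 : ∀ (i : Fin n) (jp : Fin p), ((Tz * MFc) i jp).degree ≤ 1 := by
    intro i jp
    simpa [Matrix.fromCols_apply_inr] using hdeg i (Sum.inr (Sum.inr jp))
  have h1 : ∀ (i : Fin n) (jn : Fin n),
      (((Polynomial.X : Polynomial ℝ) • (Tz * MEc) -
        Tz * ((ME * A + MF * Cm).map (Polynomial.C : ℝ →+* Polynomial ℝ))) i jn).degree ≤ 1 := by
    intro i jn
    have := hdeg i (Sum.inl jn)
    rw [hconstA] at this
    simpa [Matrix.fromCols_apply_inl] using this
  -- uniform degree bound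
  set D : ℕ := Finset.univ.sup
    (fun il : Fin n × Fin (n + p - r) => (Tz il.1 il.2).natDegree) with hDdef
  have hD : ∀ (i : Fin n) (l : Fin (n + p - r)), (Tz i l).natDegree ≤ D :=
    fun i l => Finset.le_sup (f := fun il : Fin n × Fin (n + p - r) =>
      (Tz il.1 il.2).natDegree) (Finset.mem_univ (i, l))
  have main : ∀ s k, 2 ≤ k → D < k + s →
      ∀ (i : Fin n) (l : Fin (n + p - r)), (Tz i l).coeff k = 0 := by
    intro s
    induction s with
    | zero =>
      intro k hk hks i l
      exact Polynomial.coeff_eq_zero_of_natDegree_lt (lt_of_le_of_lt (hD i l) (by omega))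
    | succ s ih =>
      intro k hk hks i l
      have hk1 : ∀ (i' : Fin n) (l' : Fin (n + p - r)), (Tz i' l').coeff (k + 1) = 0 :=
        fun i' l' => ih (k + 1) (by omega) (by omega) i' l'
      set v : Fin (n + p - r) → ℝ := fun l' => (Tz i l').coeff k with hv
      have hltk : (1 : WithBot ℕ) < (k : WithBot ℕ) := by
        exact_mod_cast (by omega : (1 : ℕ) < k)
      have hMFv : Matrix.vecMul v MF = 0 := by
        funext jp
        have hz : ((Tz * MFc) i jp).coeff k = 0 :=
          Polynomial.coeff_eq_zero_of_degree_lt (lt_of_le_of_lt (h3 i jp) hltk)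
        rw [hMFc, coeff_mul_mapC] at hz
        simpa [Matrix.vecMul, dotProduct, hv] using hz
      have hMEv : Matrix.vecMul v ME = 0 := by
        funext jn
        have hltk1 : (1 : WithBot ℕ) < ((k + 1 : ℕ) : WithBot ℕ) := by
          exact_mod_cast (by omega : (1 : ℕ) < k + 1)
        have hz : (((Polynomial.X : Polynomial ℝ) • (Tz * MEc) -
            Tz * ((ME * A + MF * Cm).map (Polynomial.C : ℝ →+* Polynomial ℝ))) i jn).coeff (k + 1)
            = 0 :=
          Polynomial.coeff_eq_zero_of_degree_lt (lt_of_le_of_lt (h1 i jn) hltk1)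
        rw [Matrix.sub_apply, Polynomial.coeff_sub, Matrix.smul_apply, smul_eq_mul,
          Polynomial.coeff_X_mul, coeff_mul_mapC, coeff_mul_mapC] at hz
        have hzero : ∑ l', (Tz i l').coeff (k + 1) * (ME * A + MF * Cm) l' jn = 0 := by
          apply Finset.sum_eq_zero
          intro l' _
          rw [hk1 i l', zero_mul]
        rw [hzero, sub_zero] at hz
        simpa [Matrix.vecMul, dotProduct, hv] using hz
      have hvall : Matrix.vecMul v (Matrix.fromCols ME MF) = 0 := by
        rw [Matrix.vecMul_fromCols, hMEv, hMFv]
        funext j; cases j <;> rfl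
      have hv0 : v = 0 := vecMul_zero_of_rank_rows (Matrix.fromCols ME MF) hMrank hvall
      exact congrFun hv0 l
  have hdegT : ∀ (i : Fin n) (j : Fin (n + p - r)), (Tz i j).degree ≤ 1 := by
    intro i j
    rw [Polynomial.degree_le_iff_coeff_zero]
    intro c hc
    have h2c : 2 ≤ c := by
      have : (1 : ℕ) < c := by exact_mod_cast hc
      omega
    exact main (D + 1) c h2c (by omega) i j
  refine ⟨hdegT, Matrix.of (fun i l => (Tz i l).coeff 0),
    Matrix.of (fun i l => (Tz i l).coeff 1), ?_⟩
  refine Matrix.ext fun i l => ?_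
  have h := Polynomial.eq_X_add_C_of_degree_le_one (hdegT i l)
  simp only [Matrix.add_apply, Matrix.smul_apply, Matrix.map_apply, Matrix.of_apply,
    smul_eq_mul]
  conv_lhs => rw [h]
  ring
end
end
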